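/- arXiv:1902.01149 — 11 statements merged into one kernel-verified Lean document; each statement's English description precedes it below -/
import Mathlib

section
/- Let 𝔖 be a finite system of polynomial equations with rational coefficients in s variables that is dilation invariant. Then 𝔖 is partition regular over ℕ if and only if 𝔖 has a non-trivial solution with all entries inside every multiplicatively syndetic subset of ℕ. -/
open MvPolynomial

/-- `x : ℕ^s` is a solution of the system given by polynomials `p j`:
all entries are positive integers and every polynomial vanishes at `x`. -/
def IsSolution {s k : ℕ} (p : Fin k → MvPolynomial (Fin s) ℚ) (x : Fin s → ℕ) : Prop :=
  (∀ i, 0 < x i) ∧ ∀ j, eval (fun i => (x i : ℚ)) (p j) = 0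

/-- A tuple is non-trivial if its coordinates are not all equal. -/
def IsNontrivial {s : ℕ} (x : Fin s → ℕ) : Prop :=
  ∃ i j, x i ≠ x j

/-- The system is dilation invariant: rational solutions are preserved by dilations. -/
def DilationInvariant {s k : ℕ} (p : Fin k → MvPolynomial (Fin s) ℚ) : Prop :=
  ∀ x : Fin s → ℚ, (∀ j, eval x (p j) = 0) →
    ∀ lam : ℚ, ∀ j, eval (fun i => lam * x i) (p j) = 0

/-- The system is `r`-regular over `X ⊆ ℕ`: every `r`-colouring of ℕ admits a
monochromatic non-trivial solution with all coordinates in `X`. -/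
def RRegularOver {s k : ℕ} (p : Fin k → MvPolynomial (Fin s) ℚ) (X : Set ℕ) (r : ℕ) : Prop :=
  ∀ χ : ℕ → Fin r, ∃ x : Fin s → ℕ, IsSolution p x ∧ IsNontrivial x ∧
    (∀ i, x i ∈ X) ∧ ∀ i j, χ (x i) = χ (x j)

/-- The system is partition regular over `X`: `r`-regular over `X` for every `r`. -/
def PartitionRegularOver {s k : ℕ} (p : Fin k → MvPolynomial (Fin s) ℚ) (X : Set ℕ) : Prop :=
  ∀ r : ℕ, RRegularOver p X r

/-- `S` is multiplicatively `F`-syndetic: every positive `n` has some `t ∈ F` with `n*t ∈ S`. -/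
def MultSyndeticWith (F : Finset ℕ) (S : Set ℕ) : Prop :=
  ∀ n : ℕ, 0 < n → ∃ t ∈ F, n * t ∈ S

/-- `S` is multiplicatively syndetic: multiplicatively `F`-syndetic for some nonempty
finite set `F` of positive integers. -/
def MultSyndetic (S : Set ℕ) : Prop :=
  ∃ F : Finset ℕ, F.Nonempty ∧ (∀ t ∈ F, 0 < t) ∧ MultSyndeticWith F S

/-- `T` is multiplicatively thick: every finite set of positive integers has a dilate inside `T`. -/
def MultThick (T : Set ℕ) : Prop :=
  ∀ F : Finset ℕ, (∀ t ∈ F, 0 < t) → ∃ n : ℕ, 0 < n ∧ ∀ t ∈ F, n * t ∈ T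

section Aux

open Filter Topology

private lemma dilate_solution {s k : ℕ} {p : Fin k → MvPolynomial (Fin s) ℚ}
    (hdil : DilationInvariant p) {x : Fin s → ℕ} (hx : IsSolution p x)
    {n : ℕ} (hn : 0 < n) : IsSolution p (fun i => n * x i) := by
  refine ⟨fun i => Nat.mul_pos hn (hx.1 i), fun j => ?_⟩
  have h := hdil (fun i => (x i : ℚ)) hx.2 (n : ℚ) j
  have he : (fun i => ((n * x i : ℕ) : ℚ)) = fun i => (n : ℚ) * ((x i : ℕ) : ℚ) := by
    funext i; push_cast; ring
  rw [he]; exact h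

private lemma dilate_nontrivial {s : ℕ} {x : Fin s → ℕ} (hx : IsNontrivial x)
    {n : ℕ} (hn : 0 < n) : IsNontrivial (fun i => n * x i) := by
  obtain ⟨i, j, hij⟩ := hx
  exact ⟨i, j, fun h => hij (Nat.eq_of_mul_eq_mul_left hn h)⟩

end Aux


open Filter Topology in
/-- A dilation invariant finite system of polynomial equations is
partition regular over ℕ iff it has a non-trivial solution inside every
multiplicatively syndetic set. -/
theorem partition_regular_iff_syndetic_solution {s k : ℕ}
    (p : Fin k → MvPolynomial (Fin s) ℚ) (hdil : DilationInvariant p) :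
    PartitionRegularOver p {n : ℕ | 0 < n} ↔
      ∀ S : Set ℕ, MultSyndetic S →
        ∃ x : Fin s → ℕ, IsSolution p x ∧ IsNontrivial x ∧ ∀ i, x i ∈ S := by
  classical
  constructor
  · -- partition regular → solution in every syndetic set
    intro hPR S hS
    obtain ⟨F, hFne, hFpos, hFsyn⟩ := hS
    obtain ⟨u₀, hu₀⟩ := hFne
    set e := F.equivFin with he
    set χ : ℕ → Fin F.card := fun m =>
      if h : ∃ u : F, m * (u : ℕ) ∈ S then e h.choose else e ⟨u₀, hu₀⟩ with hχ
    obtain ⟨x, hsol, hnt, -, hmono⟩ := hPR F.card χ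
    have hex : ∀ i, ∃ u : F, x i * (u : ℕ) ∈ S := by
      intro i
      obtain ⟨t, htF, htS⟩ := hFsyn (x i) (hsol.1 i)
      exact ⟨⟨t, htF⟩, htS⟩
    obtain ⟨i0, j0, hij0⟩ := hnt
    set u : F := (hex i0).choose with hu
    have huS : ∀ i, x i * (u : ℕ) ∈ S := by
      intro i
      have h1 : χ (x i) = e (hex i).choose := dif_pos (hex i)
      have h2 : χ (x i0) = e (hex i0).choose := dif_pos (hex i0)
      have h3 := hmono i i0
      rw [h1, h2] at h3
      have h4 : (hex i).choose = u := e.injective h3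
      rw [← h4]; exact (hex i).choose_spec
    have hupos : 0 < (u : ℕ) := hFpos _ u.2
    refine ⟨fun i => x i * (u : ℕ), ?_, ?_, huS⟩
    · have hs2 := dilate_solution hdil hsol hupos
      have hcomm : (fun i => x i * (u : ℕ)) = fun i => (u : ℕ) * x i := by
        funext i; ring
      rw [hcomm]; exact hs2
    · exact ⟨i0, j0, fun h => hij0 (Nat.eq_of_mul_eq_mul_right hupos h)⟩
  · -- solution in every syndetic set → partition regular
    intro hsyn r χ
    by_contra hcon
    push_neg at hcon
    -- the set of "bad" colourings
    set Bad : Set (ℕ → Fin r) :=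
      {σ | ∀ x : Fin s → ℕ, IsSolution p x → IsNontrivial x →
        ∃ i j, σ (x i) ≠ σ (x j)} with hBadDef
    have hχBad : χ ∈ Bad := by
      intro x hx hnt
      by_contra h
      push_neg at h
      obtain ⟨i, j, hij⟩ := hcon x hx hnt (fun i => hx.1 i)
      exact hij (h i j)
    have hBadClosed : IsClosed Bad := by
      have hrw : Bad = ⋂ x ∈ {x : Fin s → ℕ | IsSolution p x ∧ IsNontrivial x},
          ⋃ i, ⋃ j, {σ : ℕ → Fin r | σ (x i) ≠ σ (x j)} := by
        ext σ
        simp only [hBadDef, Set.mem_setOf_eq, Set.mem_iInter, Set.mem_iUnion]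
        exact ⟨fun h x hx => h x hx.1 hx.2, fun h x h1 h2 => h x ⟨h1, h2⟩⟩
      rw [hrw]
      refine isClosed_biInter fun x _ => ?_
      refine isClosed_iUnion_of_finite fun i => isClosed_iUnion_of_finite fun j => ?_
      exact IsClosed.preimage
        (f := fun σ : ℕ → Fin r => (σ (x i), σ (x j)))
        ((continuous_apply (x i)).prodMk (continuous_apply (x j)))
        (isClosed_discrete {q : Fin r × Fin r | q.1 ≠ q.2})
    have hBadInv : ∀ σ ∈ Bad, ∀ n : ℕ, 0 < n → (fun a => σ (n * a)) ∈ Bad := by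
      intro σ hσ n hn x hx hnt
      obtain ⟨i, j, hij⟩ :=
        hσ (fun i => n * x i) (dilate_solution hdil hx hn) (dilate_nontrivial hnt hn)
      exact ⟨i, j, hij⟩
    -- the collection of closed nonempty invariant subsets of Bad
    set 𝒞 : Set (Set (ℕ → Fin r)) :=
      {K | K ⊆ Bad ∧ K.Nonempty ∧ IsClosed K ∧
        ∀ σ ∈ K, ∀ n : ℕ, 0 < n → (fun a => σ (n * a)) ∈ K} with h𝒞Def
    have hBad𝒞 : Bad ∈ 𝒞 := ⟨subset_rfl, ⟨χ, hχBad⟩, hBadClosed, hBadInv⟩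
    have hzorn : ∀ c ⊆ 𝒞, IsChain (· ⊆ ·) c → c.Nonempty →
        ∃ lb ∈ 𝒞, ∀ t ∈ c, lb ⊆ t := by
      intro c hc hchain hcne
      refine ⟨⋂₀ c, ⟨?_, ?_, ?_, ?_⟩, fun t ht => Set.sInter_subset_of_mem ht⟩
      · obtain ⟨K0, hK0⟩ := hcne
        exact (Set.sInter_subset_of_mem hK0).trans (hc hK0).1
      · haveI : Nonempty c := hcne.to_subtype
        have hdir : Directed (· ⊇ ·) (fun K : c => (K : Set (ℕ → Fin r))) := by
          intro K1 K2
          rcases eq_or_ne (K1 : Set (ℕ → Fin r)) K2 with h | h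
          · exact ⟨K1, subset_rfl, h.le⟩
          · rcases hchain K1.2 K2.2 (fun hh => h (by exact_mod_cast hh)) with h' | h'
            · exact ⟨K1, subset_rfl, h'⟩
            · exact ⟨K2, h', subset_rfl⟩
        have hne := IsCompact.nonempty_iInter_of_directed_nonempty_isCompact_isClosed
          (fun K : c => (K : Set (ℕ → Fin r))) hdir
          (fun K => (hc K.2).2.1)
          (fun K => ((hc K.2).2.2.1).isCompact)
          (fun K => (hc K.2).2.2.1)
        rwa [← Set.sInter_eq_iInter] at hne
      · exact isClosed_sInter fun K hK => (hc hK).2.2.1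
      · intro σ hσ n hn
        rw [Set.mem_sInter] at hσ ⊢
        intro K hK
        exact (hc hK).2.2.2 σ (hσ K hK) n hn
    obtain ⟨K, -, hKmin⟩ := zorn_superset_nonempty 𝒞 hzorn Bad hBad𝒞
    obtain ⟨hKBad, ⟨χs, hχs⟩, hKcl, hKinv⟩ := hKmin.prop
    set c : Fin r := χs 1 with hcDef
    set S : Set ℕ := {n | 0 < n ∧ χs n = c} with hSDef
    -- S is multiplicatively syndetic
    have hSsyn : MultSyndetic S := by
      by_contra hns
      have hm : ∀ m : ℕ, ∃ n : ℕ, 0 < n ∧ ∀ t ∈ Finset.Icc 1 (m + 1), n * t ∉ S := by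
        intro m
        have hnot : ¬ MultSyndeticWith (Finset.Icc 1 (m + 1)) S := by
          intro h
          exact hns ⟨Finset.Icc 1 (m + 1), ⟨1, by simp⟩,
            fun t ht => (Finset.mem_Icc.1 ht).1, h⟩
        unfold MultSyndeticWith at hnot
        push_neg at hnot
        obtain ⟨n, hn1, hn2⟩ := hnot
        exact ⟨n, hn1, hn2⟩
      choose n hnpos hnS using hm
      set g : ℕ → (ℕ → Fin r) := fun m => fun a => χs (n m * a) with hgDef
      have hgK : ∀ m, g m ∈ K := fun m => hKinv χs hχs (n m) (hnpos m)
      have hgne : ∀ m t, 1 ≤ t → t ≤ m + 1 → g m t ≠ c := by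
        intro m t h1 h2 hc'
        exact hnS m t (Finset.mem_Icc.2 ⟨h1, h2⟩) ⟨Nat.mul_pos (hnpos m) h1, hc'⟩
      have hle : Filter.map g Filter.atTop ≤ Filter.principal K :=
        Filter.le_principal_iff.2 (Filter.mem_map.2 (Filter.Eventually.of_forall hgK))
      obtain ⟨σ, hσK, hσcl⟩ := (hKcl.isCompact).exists_clusterPt hle
      have hσne : ∀ t, 1 ≤ t → σ t ≠ c := by
        intro t ht
        have hU : {τ : ℕ → Fin r | τ t = σ t} ∈ 𝓝 σ := by
          have hop : IsOpen {τ : ℕ → Fin r | τ t = σ t} := by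
            have h1 : IsOpen ((fun τ : ℕ → Fin r => τ t) ⁻¹' {a : Fin r | a = σ t}) :=
              (continuous_apply t).isOpen_preimage _ (isOpen_discrete _)
            exact h1
          exact hop.mem_nhds rfl
        have hV : {τ : ℕ → Fin r | ∃ m, t ≤ m ∧ g m = τ} ∈ Filter.map g Filter.atTop := by
          apply Filter.mem_map.2
          filter_upwards [Filter.eventually_ge_atTop t] with m hm
          exact ⟨m, hm, rfl⟩
        haveI : (𝓝 σ ⊓ Filter.map g Filter.atTop).NeBot := hσcl
        obtain ⟨τ, hτU, hτV⟩ := Filter.nonempty_of_mem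
          (Filter.inter_mem (Filter.mem_inf_of_left hU) (Filter.mem_inf_of_right hV))
        obtain ⟨m, hmt, rfl⟩ := hτV
        intro hσc
        exact hgne m t ht (hmt.trans (Nat.le_succ m)) (by rw [hτU, hσc])
      -- minimality: χs is in the closure of the dilation orbit of σ
      set Orb : Set (ℕ → Fin r) := {τ | ∃ m : ℕ, 0 < m ∧ τ = fun a => σ (m * a)} with hOrbDef
      have hOrbK : Orb ⊆ K := by
        rintro τ ⟨m, hm, rfl⟩
        exact hKinv σ hσK m hm
      have hK' : closure Orb ∈ 𝒞 := by
        refine ⟨(closure_minimal hOrbK hKcl).trans hKBad,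
          ⟨(fun a => σ (1 * a)), subset_closure ⟨1, one_pos, rfl⟩⟩,
          isClosed_closure, ?_⟩
        intro τ hτ m hm
        have hcont : Continuous (fun (ρ : ℕ → Fin r) => (fun a => ρ (m * a))) :=
          continuous_pi fun a => continuous_apply (m * a)
        have himg : (fun (ρ : ℕ → Fin r) => (fun a => ρ (m * a))) '' Orb ⊆ Orb := by
          rintro _ ⟨ρ, ⟨q, hq, rfl⟩, rfl⟩
          refine ⟨q * m, Nat.mul_pos hq hm, ?_⟩
          funext a
          show σ (q * (m * a)) = σ (q * m * a)
          rw [Nat.mul_assoc]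
        exact closure_mono himg
          (image_closure_subset_closure_image hcont ⟨τ, hτ, rfl⟩)
      have hχsOrb : χs ∈ closure Orb :=
        hKmin.2 hK' (closure_minimal hOrbK hKcl) hχs
      have hUopen : IsOpen {τ : ℕ → Fin r | τ 1 = c} := by
        have h1 : IsOpen ((fun τ : ℕ → Fin r => τ 1) ⁻¹' {a : Fin r | a = c}) :=
          (continuous_apply 1).isOpen_preimage _ (isOpen_discrete _)
        exact h1
      obtain ⟨τ, hτU, m, hm, rfl⟩ := mem_closure_iff.1 hχsOrb _ hUopen rfl
      exact hσne m hm (by simpa using hτU)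
    -- but S contains no nontrivial solution, contradiction
    obtain ⟨x, hxsol, hxnt, hxS⟩ := hsyn S hSsyn
    obtain ⟨i, j, hij⟩ := hKBad hχs x hxsol hxnt
    exact hij ((hxS i).2.trans (hxS j).2.symm)
end

section
/- Let 𝔖₁,…,𝔖_s be finite systems of polynomial equations with rational coefficients, each dilation invariant and partition regular over ℕ. Then for any finite colouring ℕ = C₁ ∪ ⋯ ∪ C_r there exists a colour class C_t such that every 𝔖_i has a solution all of whose entries lie in C_t. -/
open MvPolynomial

/-- A dilation invariant PR system has, in any multiplicatively thick set,
a solution monochromatic for any given colouring. -/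
lemma solve_in_thick {s k r : ℕ} (p : Fin k → MvPolynomial (Fin s) ℚ)
    (hdil : DilationInvariant p) (hpr : PartitionRegularOver p {n : ℕ | 0 < n})
    (T : Set ℕ) (hT : MultThick T) (χ : ℕ → Fin r) :
    ∃ x : Fin s → ℕ, IsSolution p x ∧ (∀ j, x j ∈ T) ∧ ∀ j j', χ (x j) = χ (x j') := by
  have hn : ∀ m : ℕ, ∃ n, 0 < n ∧ ∀ t ∈ Finset.Icc 1 m, n * t ∈ T := by
    intro m
    exact hT (Finset.Icc 1 m) (fun t ht => (Finset.mem_Icc.mp ht).1)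
  choose n hnpos hnT using hn
  set U : Ultrafilter ℕ := Filter.hyperfilter ℕ with hU
  have hpig : ∀ a : ℕ, ∃ t : Fin r, {m : ℕ | χ (n m * a) = t} ∈ U := by
    intro a
    obtain ⟨t, ht⟩ := Ultrafilter.eq_pure_of_finite (U.map (fun m => χ (n m * a)))
    refine ⟨t, ?_⟩
    have : {t} ∈ U.map (fun m => χ (n m * a)) := by rw [ht]; exact rfl
    simpa [Ultrafilter.mem_map, Set.preimage, Set.mem_singleton_iff] using this
  choose ψ hψ using hpig
  obtain ⟨x, hxsol, -, -, hmono⟩ := hpr r ψ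
  have hA : {m : ℕ | ∀ j : Fin s, χ (n m * x j) = ψ (x j)} ∈ U := by
    have h2 : (⋂ j : Fin s, {m : ℕ | χ (n m * x j) = ψ (x j)}) ∈ U :=
      (Filter.iInter_mem).mpr (fun j => hψ (x j))
    have he : {m : ℕ | ∀ j : Fin s, χ (n m * x j) = ψ (x j)}
        = ⋂ j : Fin s, {m : ℕ | χ (n m * x j) = ψ (x j)} := by
      ext a; simp [Set.mem_iInter]
    rw [he]; exact h2
  have hB : {m : ℕ | (Finset.univ.sup x) ≤ m} ∈ U :=
    Nat.hyperfilter_le_atTop (Filter.mem_atTop _)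
  obtain ⟨m, hmA, hmB⟩ := (U.toFilter.nonempty_of_mem (Filter.inter_mem hA hB))
  refine ⟨fun j => n m * x j, ⟨?_, ?_⟩, ?_, ?_⟩
  · intro j; exact Nat.mul_pos (hnpos m) (hxsol.1 j)
  · intro j
    have := hdil (fun i => (x i : ℚ)) hxsol.2 (n m) j
    have he : (fun i => ((n m * x i : ℕ) : ℚ)) = fun i => (n m : ℚ) * (x i : ℚ) := by
      funext i; push_cast; ring
    rw [he]; exact this
  · intro j
    apply hnT m
    exact Finset.mem_Icc.mpr ⟨hxsol.1 j, le_trans (Finset.le_sup (Finset.mem_univ j)) hmB⟩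
  · intro j j'
    have h1 : χ (n m * x j) = ψ (x j) := hmA j
    have h2 : χ (n m * x j') = ψ (x j') := hmA j'
    rw [h1, h2, hmono j j']

/-- For any finite colouring, some colour class is "piecewise multiplicatively syndetic". -/
lemma exists_ps_class (r : ℕ) (hr : 0 < r) (χ : ℕ → Fin r) :
    ∃ t : Fin r, ∃ F₀ : Finset ℕ, F₀.Nonempty ∧ (∀ u ∈ F₀, 0 < u) ∧
      ∀ G : Finset ℕ, (∀ g ∈ G, 0 < g) →
        ∃ n, 0 < n ∧ ∀ g ∈ G, ∃ u ∈ F₀, χ (n * g * u) = t := by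
  classical
  set D : ℕ → Set ℕ := fun j => {a | j ≤ (χ a).val} with hD
  have h0 : MultThick (D 0) := by
    intro F hF
    exact ⟨1, one_pos, fun u hu => Nat.zero_le _⟩
  have hrnot : ¬ MultThick (D r) := by
    intro h
    obtain ⟨n, hn, hmem⟩ := h {1} (by simp)
    have h2 := hmem 1 (by simp)
    simp only [hD, Set.mem_setOf_eq] at h2
    exact (χ (n * 1)).isLt.not_ge h2
  set j := Nat.findGreatest (fun j => MultThick (D j)) r with hj
  have hjthick : MultThick (D j) := Nat.findGreatest_spec (P := fun j => MultThick (D j)) (Nat.zero_le r) h0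
  have hjle : j ≤ r := Nat.findGreatest_le r
  have hjlt : j < r := lt_of_le_of_ne hjle (fun h => hrnot (h ▸ hjthick))
  have hjnot : ¬ MultThick (D (j + 1)) :=
    Nat.findGreatest_is_greatest (Nat.lt_succ_self j) hjlt
  rw [MultThick] at hjnot
  push_neg at hjnot
  obtain ⟨F₀, hF₀pos, hF₀⟩ := hjnot
  have hF₀' : ∀ n : ℕ, 0 < n → ∃ u ∈ F₀, (χ (n * u)).val ≤ j := by
    intro n hn
    obtain ⟨a, ⟨ha, ha2⟩⟩ := hF₀ n hn
    exact ⟨a, ha, by simpa [D, Nat.lt_succ_iff] using ha2⟩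
  have hne : F₀.Nonempty := by
    obtain ⟨u, hu, -⟩ := hF₀' 1 one_pos
    exact ⟨u, hu⟩
  refine ⟨⟨j, hjlt⟩, F₀, hne, hF₀pos, ?_⟩
  intro G hG
  have hprodpos : ∀ u ∈ (G ×ˢ F₀).image (fun q => q.1 * q.2), 0 < u := by
    intro u hu
    obtain ⟨⟨a, b⟩, hab, rfl⟩ := Finset.mem_image.mp hu
    obtain ⟨ha, hb⟩ := Finset.mem_product.mp hab
    exact Nat.mul_pos (hG a ha) (hF₀pos b hb)
  obtain ⟨n, hn, hmem⟩ := hjthick ((G ×ˢ F₀).image (fun q => q.1 * q.2)) hprodpos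
  refine ⟨n, hn, ?_⟩
  intro g hg
  obtain ⟨u, hu, hule⟩ := hF₀' (n * g) (Nat.mul_pos hn (hG g hg))
  refine ⟨u, hu, ?_⟩
  have h1 : j ≤ (χ (n * (g * u))).val := by
    apply hmem
    exact Finset.mem_image.mpr ⟨(g, u), Finset.mem_product.mpr ⟨hg, hu⟩, rfl⟩
  rw [mul_assoc] at hule ⊢
  exact Fin.ext (le_antisymm hule h1)

lemma solve_in_ps {s k r : ℕ} (p : Fin k → MvPolynomial (Fin s) ℚ)
    (hdil : DilationInvariant p) (hpr : PartitionRegularOver p {n : ℕ | 0 < n})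
    (χ : ℕ → Fin r) (t : Fin r) (F₀ : Finset ℕ) (hne : F₀.Nonempty)
    (hpos : ∀ u ∈ F₀, 0 < u)
    (hPS : ∀ G : Finset ℕ, (∀ g ∈ G, 0 < g) →
      ∃ n, 0 < n ∧ ∀ g ∈ G, ∃ u ∈ F₀, χ (n * g * u) = t) :
    ∃ x : Fin s → ℕ, IsSolution p x ∧ ∀ j, χ (x j) = t := by
  classical
  set T : Set ℕ := {a | ∃ u ∈ F₀, χ (a * u) = t} with hT
  have hthick : MultThick T := by
    intro G hG
    obtain ⟨n, hn, h⟩ := hPS G hG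
    refine ⟨n, hn, fun g hg => ?_⟩
    obtain ⟨u, hu, hcu⟩ := h g hg
    exact ⟨u, hu, hcu⟩
  -- selector
  have husel : ∀ a : ℕ, ∃ u, u ∈ F₀ ∧ (a ∈ T → χ (a * u) = t) := by
    intro a
    by_cases h : a ∈ T
    · obtain ⟨u, hu, hc⟩ := h
      exact ⟨u, hu, fun _ => hc⟩
    · exact ⟨hne.choose, hne.choose_spec, fun ha => absurd ha h⟩
  choose u huF husp using husel
  set e := F₀.orderIsoOfFin rfl with he
  set ψ : ℕ → Fin F₀.card := fun a => e.symm ⟨u a, huF a⟩ with hψ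
  obtain ⟨x, hxsol, hxT, hxmono⟩ := solve_in_thick p hdil hpr T hthick ψ
  have huu : ∀ j j' : Fin s, u (x j) = u (x j') := by
    intro j j'
    have := hxmono j j'
    simp only [hψ] at this
    have h3 := e.symm.injective this
    simpa using congrArg Subtype.val h3
  rcases Nat.eq_zero_or_pos s with hs | hs
  · subst hs
    exact ⟨x, hxsol, fun j => absurd j.isLt (by omega)⟩
  · set j₀ : Fin s := ⟨0, hs⟩ with hj₀
    set c := u (x j₀) with hc
    refine ⟨fun j => x j * c, ⟨?_, ?_⟩, ?_⟩
    · intro j; exact Nat.mul_pos (hxsol.1 j) (hpos _ (huF (x j₀)))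
    · intro jj
      have := hdil (fun i => (x i : ℚ)) hxsol.2 (c : ℚ) jj
      have he2 : (fun i => ((x i * c : ℕ) : ℚ)) = fun i => (c : ℚ) * (x i : ℚ) := by
        funext i; push_cast; ring
      rw [he2]; exact this
    · intro j
      have hcs : c = u (x j) := (huu j j₀).symm
      rw [hcs]
      exact husp (x j) (hxT j)

/-- Dilation invariant consistency theorem: if `𝔖₁,…,𝔖_m` are
dilation invariant partition regular systems, then any finite colouring of ℕ has a
colour class containing a solution of every system. -/
theorem consistency_theorem (m : ℕ) (v k : Fin m → ℕ)
    (p : ∀ i, Fin (k i) → MvPolynomial (Fin (v i)) ℚ)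
    (hdil : ∀ i, DilationInvariant (p i))
    (hpr : ∀ i, PartitionRegularOver (p i) {n : ℕ | 0 < n})
    (r : ℕ) (hr : 0 < r) (χ : ℕ → Fin r) :
    ∃ t : Fin r, ∀ i, ∃ x : Fin (v i) → ℕ,
      IsSolution (p i) x ∧ ∀ j, χ (x j) = t := by
  obtain ⟨t, F₀, hne, hpos, hPS⟩ := exists_ps_class r hr χ
  exact ⟨t, fun i => solve_in_ps (p i) (hdil i) (hpr i) χ t F₀ hne hpos hPS⟩
end

section
/- Let 𝔖 be a dilation invariant finite system of polynomial equations with rational coefficients, and let r ∈ ℕ. The following are equivalent: (I) 𝔖 is r-regular over ℕ; (II) 𝔖 is r-regular over every multiplicatively thick subset of ℕ; (III) 𝔖 is r-regular over some multiplicatively thick subset of ℕ. -/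
open MvPolynomial

lemma exists_bound {s k : ℕ} (p : Fin k → MvPolynomial (Fin s) ℚ) (r : ℕ)
    (h : RRegularOver p {n : ℕ | 0 < n} r) :
    ∃ N : ℕ, ∀ χ : ℕ → Fin r, ∃ x : Fin s → ℕ, IsSolution p x ∧ IsNontrivial x ∧
      (∀ i, x i ≤ N) ∧ ∀ i j, χ (x i) = χ (x j) := by
  rcases Nat.eq_zero_or_pos r with hr | hr
  · subst hr; exact ⟨0, fun χ => (χ 0).elim0⟩
  by_contra hc
  push_neg at hc
  choose χ hχ using hc
  have : Nonempty (Fin r) := ⟨⟨0, hr⟩⟩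
  have key : ∀ m : ℕ, ∃ c : Fin r, {N : ℕ | χ N m = c} ∈ Filter.hyperfilter ℕ := by
    intro m
    obtain ⟨c, hcm⟩ := (Ultrafilter.map (fun N => χ N m) (Filter.hyperfilter ℕ)).eq_pure_of_finite
    refine ⟨c, ?_⟩
    have h1 : ({c} : Set (Fin r)) ∈ (pure c : Ultrafilter (Fin r)) := by simp
    rw [← hcm, Ultrafilter.mem_map] at h1
    exact h1
  choose ψ hψ using key
  obtain ⟨x, hsol, hnt, _, hmono⟩ := h ψ
  set M := Finset.univ.sup x with hM
  have hA : ∀ᶠ N in (Filter.hyperfilter ℕ : Filter ℕ), ∀ i, χ N (x i) = ψ (x i) :=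
    Filter.eventually_all.mpr fun i => hψ (x i)
  have hB : ∀ᶠ N in (Filter.hyperfilter ℕ : Filter ℕ), M ≤ N :=
    Nat.hyperfilter_le_atTop (Filter.mem_atTop M)
  obtain ⟨N, hNA, hNB⟩ := (hA.and hB).exists
  obtain ⟨i, j, hij⟩ := hχ N x hsol hnt (fun i => le_trans (Finset.le_sup (Finset.mem_univ i)) hNB)
  exact hij (by rw [hNA i, hNA j, hmono i j])

/-- For a dilation invariant system, `r`-regularity over ℕ,
over every multiplicatively thick set, and over some multiplicatively thick set
are all equivalent. -/
theorem rRegular_tfae_thick {s k : ℕ}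
    (p : Fin k → MvPolynomial (Fin s) ℚ) (hdil : DilationInvariant p) (r : ℕ) :
    List.TFAE
      [RRegularOver p {n : ℕ | 0 < n} r,
       ∀ T : Set ℕ, MultThick T → RRegularOver p T r,
       ∃ T : Set ℕ, MultThick T ∧ RRegularOver p T r] := by
  tfae_have 1 → 2 := by
    intro h1 T hT χ
    obtain ⟨N, hN⟩ := exists_bound p r h1
    obtain ⟨n, hn, hnT⟩ := hT (Finset.Icc 1 N) (fun t ht => (Finset.mem_Icc.mp ht).1)
    obtain ⟨x, hsol, hnt, hle, hmono⟩ := hN (fun m => χ (n * m))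
    refine ⟨fun i => n * x i, ⟨fun i => Nat.mul_pos hn (hsol.1 i), fun j => ?_⟩, ?_, ?_, fun i j => hmono i j⟩
    · have heq : (fun i => ((n * x i : ℕ) : ℚ)) = fun i => (n : ℚ) * ((x i : ℕ) : ℚ) := by
        funext i; push_cast; ring
      rw [heq]
      exact hdil (fun i => (x i : ℚ)) hsol.2 (n : ℚ) j
    · obtain ⟨i, j, hij⟩ := hnt
      exact ⟨i, j, fun heq => hij (Nat.eq_of_mul_eq_mul_left hn heq)⟩
    · intro i
      exact hnT (x i) (Finset.mem_Icc.mpr ⟨hsol.1 i, hle i⟩)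
  tfae_have 2 → 3 := by
    intro h2
    refine ⟨{n : ℕ | 0 < n}, ?_, ?_⟩
    · intro F hF
      exact ⟨1, one_pos, fun t ht => by simpa using hF t ht⟩
    · apply h2
      intro F hF
      exact ⟨1, one_pos, fun t ht => by simpa using hF t ht⟩
  tfae_have 3 → 1 := by
    rintro ⟨T, -, hreg⟩ χ
    obtain ⟨x, hsol, hnt, -, hmono⟩ := hreg χ
    exact ⟨x, hsol, hnt, fun i => hsol.1 i, hmono⟩
  tfae_finish
end

section
/- Let A ⊆ ℕ, let S ⊆ ℕ be multiplicatively F-syndetic for a nonempty finite set F ⊂ ℕ, let 𝔖 be a dilation invariant finite system of polynomial equations with rational coefficients, and let r ∈ ℕ. If 𝔖 is (|F|·r)-regular over A, then 𝔖 is r-regular over S ∩ (F·A), where F·A := {ta : t ∈ F, a ∈ A}. -/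
open MvPolynomial

/-- Syndetic sets contain partition regular configurations:
if a dilation invariant system is `(|F|·r)`-regular over `A`, then it is
`r`-regular over `S ∩ (F·A)` for any multiplicatively `F`-syndetic set `S`. -/
theorem syndetic_contains_PR {s k : ℕ}
    (p : Fin k → MvPolynomial (Fin s) ℚ) (hdil : DilationInvariant p)
    (A S : Set ℕ) (F : Finset ℕ) (hFne : F.Nonempty) (hFpos : ∀ t ∈ F, 0 < t)
    (hS : MultSyndeticWith F S) (r : ℕ)
    (hreg : RRegularOver p A (F.card * r)) :
    RRegularOver p (S ∩ {m : ℕ | ∃ t ∈ F, ∃ a ∈ A, m = t * a}) r := by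
  rcases Nat.eq_zero_or_pos r with rfl | hr
  · intro χ; exact (χ 0).elim0
  intro χ
  choose! t ht hts using hS
  have hcard : 0 < F.card := Finset.card_pos.2 hFne
  let ψ : ℕ → Fin (F.card * r) := fun n =>
    if h : 0 < n then finProdFinEquiv (F.equivFin ⟨t n, ht n h⟩, χ (n * t n))
    else ⟨0, Nat.mul_pos hcard hr⟩
  obtain ⟨x, ⟨hxpos, hxeval⟩, ⟨i0, j0, hij⟩, hxA, hχ⟩ := hreg ψ
  have hψ : ∀ i, ψ (x i) =
      finProdFinEquiv (F.equivFin ⟨t (x i), ht _ (hxpos i)⟩, χ (x i * t (x i))) := by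
    intro i; simp only [ψ, dif_pos (hxpos i)]
  have hpair : ∀ i j,
      ((F.equivFin ⟨t (x i), ht _ (hxpos i)⟩, χ (x i * t (x i))) :
        Fin F.card × Fin r) = (F.equivFin ⟨t (x j), ht _ (hxpos j)⟩, χ (x j * t (x j))) := by
    intro i j
    apply finProdFinEquiv.injective
    rw [← hψ i, ← hψ j]; exact hχ i j
  have hteq : ∀ i, t (x i) = t (x i0) := by
    intro i
    have h1 := congrArg Prod.fst (hpair i i0)
    have h2 := F.equivFin.injective h1
    exact congrArg Subtype.val h2
  set T := t (x i0) with hT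
  have hTF : T ∈ F := ht _ (hxpos i0)
  have hTpos : 0 < T := hFpos _ hTF
  refine ⟨fun i => x i * T, ⟨fun i => Nat.mul_pos (hxpos i) hTpos, ?_⟩,
    ⟨i0, j0, fun h => hij (Nat.eq_of_mul_eq_mul_right hTpos h)⟩, ?_, ?_⟩
  · intro j
    have := hdil (fun i => (x i : ℚ)) hxeval (T : ℚ) j
    have heq : (fun i => ((x i * T : ℕ) : ℚ)) = fun i => (T : ℚ) * (x i : ℚ) := by
      funext i; push_cast; ring
    rw [heq]; exact this
  · intro i
    refine ⟨?_, T, hTF, x i, hxA i, mul_comm (x i) T⟩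
    have := hts _ (hxpos i)
    rwa [hteq i] at this
  · intro i j
    have h2 := congrArg Prod.snd (hpair i j)
    simpa [hteq i, hteq j] using h2
end

section
/- Let 𝔖 be a dilation invariant finite system of polynomial equations with rational coefficients. The following are equivalent: (I) 𝔖 is partition regular over ℕ; (II) 𝔖 is partition regular over every multiplicatively syndetic subset of ℕ; (III) 𝔖 is partition regular over some multiplicatively syndetic subset of ℕ. -/
open MvPolynomial

/-- For a dilation invariant system, partition regularity over ℕ,
over every multiplicatively syndetic set, and over some multiplicatively syndetic
set are all equivalent. -/
theorem partitionRegular_tfae_syndetic {s k : ℕ}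
    (p : Fin k → MvPolynomial (Fin s) ℚ) (hdil : DilationInvariant p) :
    List.TFAE
      [PartitionRegularOver p {n : ℕ | 0 < n},
       ∀ S : Set ℕ, MultSyndetic S → PartitionRegularOver p S,
       ∃ S : Set ℕ, MultSyndetic S ∧ PartitionRegularOver p S] := by
  classical
  tfae_have 1 → 2 := by
    intro hI S hS r χ
    obtain ⟨F, ⟨t0, ht0⟩, hFpos, hsyn⟩ := hS
    set τ : ℕ → {t // t ∈ F} := fun n =>
      if h : 0 < n then ⟨(hsyn n h).choose, (hsyn n h).choose_spec.1⟩ else ⟨t0, ht0⟩ with hτdef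
    have hτ : ∀ n, 0 < n → n * (τ n).1 ∈ S := by
      intro n h
      simp only [hτdef, dif_pos h]
      exact (hsyn n h).choose_spec.2
    have hcard : Fintype.card ({t // t ∈ F} × Fin r) = F.card * r := by
      simp [Fintype.card_coe]
    set e := Fintype.equivFinOfCardEq hcard with he
    obtain ⟨x, hsol, hnt, hpos, hmono⟩ :=
      hI (F.card * r) (fun n => e (τ n, χ (n * (τ n).1)))
    obtain ⟨i0, j0, hij⟩ := hnt
    set t := (τ (x i0)).1 with ht
    have htF : t ∈ F := (τ (x i0)).2
    have htpos : 0 < t := hFpos t htF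
    have hpair : ∀ i, (τ (x i), χ (x i * (τ (x i)).1)) = (τ (x i0), χ (x i0 * (τ (x i0)).1)) := by
      intro i
      exact e.injective (hmono i i0)
    have hτeq : ∀ i, τ (x i) = τ (x i0) := fun i => (Prod.mk.injEq _ _ _ _ ▸ (hpair i)).1
    have hχeq : ∀ i, χ (x i * (τ (x i)).1) = χ (x i0 * (τ (x i0)).1) :=
      fun i => (Prod.mk.injEq _ _ _ _ ▸ (hpair i)).2
    refine ⟨fun i => x i * t, ⟨fun i => Nat.mul_pos (hsol.1 i) htpos, ?_⟩,
      ⟨i0, j0, fun h => hij (Nat.eq_of_mul_eq_mul_right htpos h)⟩, ?_, ?_⟩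
    · intro j
      have hd := hdil (fun i => (x i : ℚ)) hsol.2 (t : ℚ) j
      have hfun : (fun i => ((x i * t : ℕ) : ℚ)) = fun i => (t : ℚ) * (x i : ℚ) := by
        funext i; push_cast; ring
      rw [hfun]
      exact hd
    · intro i
      have : x i * (τ (x i)).1 ∈ S := hτ (x i) (hsol.1 i)
      rwa [hτeq i] at this
    · intro i j
      have h1 := hχeq i
      have h2 := hχeq j
      rw [hτeq i] at h1
      rw [hτeq j] at h2
      simpa using h1.trans h2.symm
  tfae_have 2 → 3 := by
    intro h2
    refine ⟨{n : ℕ | 0 < n}, ⟨{1}, ⟨1, by simp⟩, by simp, ?_⟩, h2 _ ?_⟩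
    · intro n hn; exact ⟨1, by simp, by simpa using hn⟩
    · exact ⟨{1}, ⟨1, by simp⟩, by simp, fun n hn => ⟨1, by simp, by simpa using hn⟩⟩
  tfae_have 3 → 1 := by
    rintro ⟨S, _, hPR⟩ r χ
    obtain ⟨x, hsol, hnt, _, hm⟩ := hPR r χ
    exact ⟨x, hsol, hnt, fun i => hsol.1 i, hm⟩
  tfae_finish
end

section
/- Let 𝔖 be a dilation invariant finite system of polynomial equations with rational coefficients, and let r ∈ ℕ. If 𝔖 is r-regular over ℕ, then there exists a nonempty finite set F ⊂ ℕ (depending only on 𝔖 and r) such that: for every (r+1)-colouring ℕ = C₁ ∪ ⋯ ∪ C_{r+1} which has no monochromatic non-trivial solution to 𝔖, every colour class C_i is multiplicatively F-syndetic. -/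
open MvPolynomial

/-- Compactness: an `r`-regular system has solutions with a uniform bound `N`. -/
lemma compactness_bound {s k r : ℕ} (p : Fin k → MvPolynomial (Fin s) ℚ)
    (hreg : RRegularOver p {n : ℕ | 0 < n} r) :
    ∃ N : ℕ, ∀ χ : ℕ → Fin r, ∃ x : Fin s → ℕ, IsSolution p x ∧ IsNontrivial x ∧
      (∀ i, x i ≤ N) ∧ ∀ i j, χ (x i) = χ (x j) := by
  by_contra hcon
  push_neg at hcon
  choose χs hχs using hcon
  set U : Ultrafilter ℕ := Ultrafilter.of Filter.atTop with hU
  have hUle : (U : Filter ℕ) ≤ Filter.atTop := Ultrafilter.of_le _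
  have key : ∀ m : ℕ, ∃ c : Fin r, {N | χs N m = c} ∈ U := by
    intro m
    by_contra hc
    push_neg at hc
    have hmem : (⋂ c : Fin r, {N | χs N m = c}ᶜ) ∈ (U : Filter ℕ) :=
      Filter.iInter_mem.mpr fun c => Ultrafilter.compl_mem_iff_notMem.mpr (hc c)
    obtain ⟨N, hN⟩ := Filter.nonempty_of_mem hmem
    simp only [Set.mem_iInter, Set.mem_compl_iff, Set.mem_setOf_eq] at hN
    exact hN (χs N m) rfl
  choose χ hχ using key
  obtain ⟨x, hsol, hnt, hpos, hmono⟩ := hreg χ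
  set M : ℕ := Finset.univ.sup x with hM
  have hA : ({N | M ≤ N} ∩ ⋂ i : Fin s, {N | χs N (x i) = χ (x i)}) ∈ (U : Filter ℕ) := by
    refine Filter.inter_mem ?_ (Filter.iInter_mem.mpr fun i => hχ (x i)) 
    exact hUle (Filter.Ici_mem_atTop M)
  obtain ⟨N, hN1, hN2⟩ := Filter.nonempty_of_mem hA
  simp only [Set.mem_iInter, Set.mem_setOf_eq] at hN2
  obtain ⟨i, j, hij⟩ := hχs N x hsol hnt
    (fun i => le_trans (Finset.le_sup (Finset.mem_univ i)) hN1)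
  exact hij (by rw [hN2 i, hN2 j, hmono i j])

/-- Induction on colours schema: if a dilation invariant system is
`r`-regular over ℕ, there is a nonempty finite set `F` of positive integers such that
for every `(r+1)`-colouring of ℕ lacking monochromatic non-trivial solutions, each
colour class is multiplicatively `F`-syndetic. -/
theorem induction_on_colours {s k : ℕ}
    (p : Fin k → MvPolynomial (Fin s) ℚ) (hdil : DilationInvariant p)
    (r : ℕ) (hreg : RRegularOver p {n : ℕ | 0 < n} r) :
    ∃ F : Finset ℕ, F.Nonempty ∧ (∀ t ∈ F, 0 < t) ∧
      ∀ χ : ℕ → Fin (r + 1),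
        (¬ ∃ x : Fin s → ℕ, IsSolution p x ∧ IsNontrivial x ∧
            ∀ i j, χ (x i) = χ (x j)) →
        ∀ c : Fin (r + 1), MultSyndeticWith F {n : ℕ | 0 < n ∧ χ n = c} := by
  obtain ⟨N, hN⟩ := compactness_bound p hreg
  refine ⟨Finset.Icc 1 (max N 1), ⟨1, by simp⟩, fun t ht => (Finset.mem_Icc.mp ht).1, ?_⟩
  intro χ hno c n hn
  by_contra hF
  push_neg at hF
  -- for each t in F, χ (n * t) ≠ c
  have hne : ∀ t, 1 ≤ t → t ≤ max N 1 → χ (n * t) ≠ c := by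
    intro t h1 h2 hc
    exact hF t (Finset.mem_Icc.mpr ⟨h1, h2⟩) ⟨Nat.mul_pos hn h1, hc⟩
  rcases Nat.eq_zero_or_pos r with hr | hr
  · subst hr
    exact hne 1 le_rfl (le_max_right _ _) (Subsingleton.elim (α := Fin 1) _ _)
  · obtain ⟨r', rfl⟩ : ∃ r', r = r' + 1 := ⟨r - 1, by omega⟩
    set χ' : ℕ → Fin (r' + 1) := fun t =>
      if h : χ (n * t) = c then default else (Fin.exists_succAbove_eq h).choose with hχ'
    have hkey : ∀ t, (h : χ (n * t) ≠ c) → c.succAbove (χ' t) = χ (n * t) := by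
      intro t h
      simp only [hχ', dif_neg h]
      exact (Fin.exists_succAbove_eq h).choose_spec
    obtain ⟨x, hsol, hnt, hbd, hmono⟩ := hN χ'
    have hxne : ∀ i, χ (n * x i) ≠ c := fun i =>
      hne (x i) (hsol.1 i) (le_trans (hbd i) (le_max_left _ _))
    refine hno ⟨fun i => n * x i, ⟨fun i => Nat.mul_pos hn (hsol.1 i), fun j => ?_⟩,
      ?_, fun i j => ?_⟩
    · have h2 := hdil (fun i => (x i : ℚ)) hsol.2 (n : ℚ) j
      convert h2 using 2 with i
      push_cast
      ring
    · obtain ⟨i, j, hij⟩ := hnt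
      exact ⟨i, j, fun h => hij (Nat.eq_of_mul_eq_mul_left hn h)⟩
    · rw [← hkey (x i) (hxne i), ← hkey (x j) (hxne j), hmono i j]
end

section
/- Let S ⊆ ℕ be multiplicatively piecewise F-syndetic for a nonempty finite set F ⊂ ℕ, let 𝔖 be a dilation invariant finite system of polynomial equations with rational coefficients, and let r ∈ ℕ. If 𝔖 is (|F|·r)-regular over ℕ, then 𝔖 is r-regular over S. -/
open MvPolynomial

/-- `S` is multiplicatively piecewise `F`-syndetic: `⋃_{t ∈ F} t⁻¹S` is
multiplicatively thick. -/
def MultPiecewiseSyndeticWith (F : Finset ℕ) (S : Set ℕ) : Prop :=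
  MultThick {n : ℕ | 0 < n ∧ ∃ t ∈ F, n * t ∈ S}

/-- Piecewise syndetic sets contain partition regular configurations:
if a dilation invariant system is `(|F|·r)`-regular over ℕ, then it is `r`-regular over
any multiplicatively piecewise `F`-syndetic set `S`. -/
theorem piecewise_syndetic_contains_PR {s k : ℕ}
    (p : Fin k → MvPolynomial (Fin s) ℚ) (hdil : DilationInvariant p)
    (S : Set ℕ) (F : Finset ℕ) (hFne : F.Nonempty) (hFpos : ∀ t ∈ F, 0 < t)
    (hS : MultPiecewiseSyndeticWith F S) (r : ℕ)
    (hreg : RRegularOver p {n : ℕ | 0 < n} (F.card * r)) :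
    RRegularOver p S r := by
  classical
  rcases Nat.eq_zero_or_pos r with hr | hr
  · subst hr; intro χ; exact (χ 1).elim0
  intro χ
  set T : Set ℕ := {n : ℕ | 0 < n ∧ ∃ t ∈ F, n * t ∈ S} with hT
  -- choice of a witness t ∈ F for each m
  have hFne' : ∃ t, t ∈ F := hFne
  let tch : ℕ → F := fun m =>
    if h : ∃ t ∈ F, m * t ∈ S then ⟨h.choose, h.choose_spec.1⟩
    else ⟨hFne'.choose, hFne'.choose_spec⟩
  have htch : ∀ m ∈ T, m * (tch m : ℕ) ∈ S := by
    intro m hm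
    obtain ⟨-, h⟩ := hm
    simp only [tch, dif_pos h]
    exact h.choose_spec.2
  -- the coded colouring with F.card * r colours
  let enc : F × Fin r ≃ Fin (F.card * r) :=
    (Equiv.prodCongr F.equivFin (Equiv.refl _)).trans finProdFinEquiv
  let c' : ℕ → Fin (F.card * r) := fun m => enc (tch m, χ (m * (tch m : ℕ)))
  -- the family of sets of good dilation factors
  let B : Finset ℕ → Set ℕ := fun G => {n : ℕ | 0 < n ∧ ∀ m ∈ G, 0 < m → n * m ∈ T}
  have hBne : ∀ G, (B G).Nonempty := by
    intro G
    obtain ⟨n, hn, hnG⟩ := hS (G.filter (fun m => 0 < m)) (by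
      intro t ht; exact (Finset.mem_filter.mp ht).2)
    exact ⟨n, hn, fun m hm hm0 => hnG m (Finset.mem_filter.mpr ⟨hm, hm0⟩)⟩
  have hBmono : ∀ G G', G ⊆ G' → B G' ⊆ B G := by
    intro G G' hGG' n hn
    exact ⟨hn.1, fun m hm hm0 => hn.2 m (hGG' hm) hm0⟩
  let L : Filter ℕ := ⨅ G : Finset ℕ, Filter.principal (B G)
  have hLne : L.NeBot := by
    apply Filter.iInf_neBot_of_directed
    · intro G G'
      exact ⟨G ∪ G', Filter.principal_mono.mpr (hBmono _ _ (by simp)),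
        Filter.principal_mono.mpr (hBmono _ _ (by simp))⟩
    · intro G
      exact Filter.principal_neBot_iff.mpr (hBne G)
  let U : Ultrafilter ℕ := @Ultrafilter.of _ L hLne
  have hBU : ∀ G, B G ∈ U := by
    intro G
    exact Ultrafilter.of_le L (Filter.mem_iInf_of_mem G (Filter.mem_principal_self _))
  -- the limit colouring
  have hψex : ∀ m : ℕ, ∃ v, {n : ℕ | c' (n * m) = v} ∈ U := by
    intro m
    obtain ⟨v, -, hv⟩ := Ultrafilter.eq_pure_of_finite_mem (f := U.map (fun n => c' (n * m)))
      (Set.finite_univ) (Filter.univ_mem)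
    refine ⟨v, ?_⟩
    have : {v} ∈ U.map (fun n => c' (n * m)) := by rw [hv]; exact rfl
    simpa [Ultrafilter.mem_map, Set.preimage, Set.mem_singleton_iff] using this
  choose ψ hψ using hψex
  -- apply regularity over ℕ
  obtain ⟨x, ⟨hxpos, hxsol⟩, ⟨i0, j0, hij⟩, hxmem, hxmono⟩ := hreg ψ
  -- find a single good dilation factor n
  let G : Finset ℕ := Finset.image x Finset.univ
  have hA : (B G ∩ ⋂ i : Fin s, {n : ℕ | c' (n * x i) = ψ (x i)}) ∈ U := by
    apply Filter.inter_mem (hBU G)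
    exact (Filter.iInter_mem).mpr fun i => hψ (x i)
  obtain ⟨n, hnB, hnI⟩ := Filter.nonempty_of_mem hA
  have hnpos : 0 < n := hnB.1
  have hnT : ∀ i, n * x i ∈ T := by
    intro i
    exact hnB.2 (x i) (Finset.mem_image.mpr ⟨i, Finset.mem_univ i, rfl⟩) (hxmem i)
  have hnc : ∀ i, c' (n * x i) = ψ (x i) := by
    intro i
    have := Set.mem_iInter.mp hnI i
    exact this
  have hceq : ∀ i j : Fin s, c' (n * x i) = c' (n * x j) := by
    intro i j; rw [hnc i, hnc j, hxmono i j]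
  -- extract common t and common colour
  have hpair : ∀ i j : Fin s, tch (n * x i) = tch (n * x j) ∧
      χ (n * x i * (tch (n * x i) : ℕ)) = χ (n * x j * (tch (n * x j) : ℕ)) := by
    intro i j
    have h := enc.injective (hceq i j)
    exact ⟨congrArg Prod.fst h, congrArg Prod.snd h⟩
  set t : ℕ := (tch (n * x i0) : ℕ) with ht
  have htF : t ∈ F := (tch (n * x i0)).2
  have htpos : 0 < t := hFpos t htF
  have htall : ∀ i, (tch (n * x i) : ℕ) = t := by
    intro i; rw [ht]; exact congrArg Subtype.val (hpair i i0).1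
  refine ⟨fun i => x i * (n * t), ⟨?_, ?_⟩, ⟨i0, j0, ?_⟩, ?_, ?_⟩
  · intro i; exact Nat.mul_pos (hxpos i) (Nat.mul_pos hnpos htpos)
  · intro j
    have h1 := hdil (fun i => (x i : ℚ)) hxsol ((n : ℚ) * t) j
    have heq : (fun i => (((x i * (n * t)) : ℕ) : ℚ)) = fun i => ((n : ℚ) * t) * (x i : ℚ) := by
      funext i; push_cast; ring
    show eval (fun i => (((x i * (n * t)) : ℕ) : ℚ)) (p j) = 0
    rw [heq]; exact h1
  · intro h
    exact hij (Nat.eq_of_mul_eq_mul_right (Nat.mul_pos hnpos htpos) h)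
  · intro i
    have h2 : x i * (n * t) = n * x i * (tch (n * x i) : ℕ) := by rw [htall i]; ring
    show x i * (n * t) ∈ S
    rw [h2]
    exact htch _ (hnT i)
  · intro i j
    have hi : x i * (n * t) = n * x i * (tch (n * x i) : ℕ) := by rw [htall i]; ring
    have hj : x j * (n * t) = n * x j * (tch (n * x j) : ℕ) := by rw [htall j]; ring
    show χ (x i * (n * t)) = χ (x j * (n * t))
    rw [hi, hj]
    exact (hpair i j).2
end

section
/- Let F ⊂ ℕ be a nonempty finite set with largest element M, and let N ∈ ℕ. If S ⊆ ℕ is multiplicatively F-syndetic, then |S ∩ {1,…,N}| ≥ (1/|F|)·⌊N/M⌋. -/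
/-- A multiplicatively `F`-syndetic set `S` with `M = max F` satisfies
`|S ∩ [N]| ≥ ⌊N/M⌋ / |F|`. -/
theorem syndetic_density (F : Finset ℕ) (hFne : F.Nonempty) (hFpos : ∀ t ∈ F, 0 < t)
    (M : ℕ) (hM : M = F.max' hFne) (N : ℕ) (S : Set ℕ)
    (hS : MultSyndeticWith F S) :
    ((N / M : ℕ) : ℝ) / F.card ≤ ((S ∩ Set.Icc 1 N).ncard : ℝ) := by
  classical
  have hMpos : 0 < M := hM ▸ hFpos _ (F.max'_mem hFne)
  choose t ht hts using hS
  set g : ℕ → ℕ := fun n => if h : 0 < n then t n h else 1 with hg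
  set K := N / M with hK
  set T : Finset ℕ := (Finset.Icc 1 N).filter (· ∈ S) with hT
  have hgF : ∀ n, 0 < n → g n ∈ F := by
    intro n hn; simp only [hg, dif_pos hn]; exact ht n hn
  have hgS : ∀ n, 0 < n → n * g n ∈ S := by
    intro n hn; simp only [hg, dif_pos hn]; exact hts n hn
  have hmaps : ∀ n ∈ Finset.Icc 1 K, n * g n ∈ T := by
    intro n hn
    rw [Finset.mem_Icc] at hn
    have hn1 : 0 < n := hn.1
    have hgM : g n ≤ M := hM ▸ F.le_max' _ (hgF n hn1)
    refine Finset.mem_filter.mpr ⟨Finset.mem_Icc.mpr ⟨?_, ?_⟩, hgS n hn1⟩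
    · exact Nat.one_le_iff_ne_zero.mpr (Nat.mul_ne_zero hn1.ne' (hFpos _ (hgF n hn1)).ne')
    · calc n * g n ≤ K * M := Nat.mul_le_mul hn.2 hgM
        _ ≤ N := Nat.div_mul_le_self N M
  have hfib : ∀ b ∈ T, ((Finset.Icc 1 K).filter (fun n => n * g n = b)).card ≤ F.card := by
    intro b _
    apply Finset.card_le_card_of_injOn g
    · intro n hn
      rw [Finset.mem_coe, Finset.mem_filter, Finset.mem_Icc] at hn
      exact hgF n hn.1.1
    · intro n₁ h₁ n₂ h₂ heq
      rw [Finset.mem_coe, Finset.mem_filter, Finset.mem_Icc] at h₁ h₂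
      have : n₁ * g n₁ = n₂ * g n₁ := by rw [h₁.2, heq, h₂.2]
      exact Nat.eq_of_mul_eq_mul_right (hFpos _ (hgF n₁ h₁.1.1)) this
  have hcard : K ≤ F.card * T.card := by
    have := Finset.card_le_mul_card_image_of_maps_to hmaps F.card hfib
    simpa using this
  have hTcard : (S ∩ Set.Icc 1 N).ncard = T.card := by
    rw [← Set.ncard_coe_finset]
    congr 1
    ext x
    simp only [hT, Finset.coe_filter, Finset.mem_Icc, Set.mem_inter_iff, Set.mem_Icc,
      Set.mem_setOf_eq]
    tauto
  rw [hTcard]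
  have hFc : (0:ℝ) < F.card := by exact_mod_cast Finset.card_pos.mpr hFne
  rw [div_le_iff₀ hFc]
  calc (K:ℝ) ≤ (F.card * T.card : ℕ) := by exact_mod_cast hcard
    _ = T.card * F.card := by push_cast; ring
end

section
/- Let a, k ∈ ℕ with a ≥ 2 and k ≥ 2, let F = {1, a, a², …, a^{k−1}}, and define S(a,k) := {n ∈ ℕ : ν_a(n) ≡ k−1 (mod k)}, where ν_a(n) := max{j ∈ ℕ ∪ {0} : a^j ∣ n}. Then S(a,k) is multiplicatively F-syndetic, and S(a,k) has natural asymptotic density (a−1)/(a^k−1), i.e. |S(a,k) ∩ {1,…,N}|/N → (a−1)/(a^k−1) as N → ∞. -/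
/-- The `a`-multiplicity `ν_a(n)`: the largest `j` with `a^j ∣ n` (for `a ≥ 2`, `n ≥ 1`). -/
def nuMult (a n : ℕ) : ℕ := Nat.findGreatest (fun j => a ^ j ∣ n) n

/-- The set `S(a,k) = {n ∈ ℕ : ν_a(n) ≡ k-1 (mod k)}`. -/
def Sak (a k : ℕ) : Set ℕ := {n : ℕ | 0 < n ∧ nuMult a n % k = k - 1}

section Auxiliary

lemma nu_le {a n j : ℕ} (ha : 2 ≤ a) (hn : 0 < n) (h : a ^ j ∣ n) : j ≤ n := by
  have h1 : j < 2 ^ j := Nat.lt_two_pow_self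
  have h2 : 2 ^ j ≤ a ^ j := Nat.pow_le_pow_left ha j
  have h3 : a ^ j ≤ n := Nat.le_of_dvd hn h
  omega

lemma nuMult_eq_iff {a n j : ℕ} (ha : 2 ≤ a) (hn : 0 < n) :
    nuMult a n = j ↔ a ^ j ∣ n ∧ ¬ a ^ (j + 1) ∣ n := by
  rw [nuMult, Nat.findGreatest_eq_iff]
  constructor
  · rintro ⟨h1, h2, h3⟩
    refine ⟨?_, fun hd => h3 (Nat.lt_succ_self j) (nu_le ha hn hd) hd⟩
    rcases Nat.eq_zero_or_pos j with rfl | hj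
    · simpa using one_dvd n
    · exact h2 hj.ne'
  · rintro ⟨h1, h2⟩
    exact ⟨nu_le ha hn h1, fun _ => h1,
      fun m hm hmn hd => h2 ((pow_dvd_pow a hm).trans hd)⟩

lemma nuMult_mul_pow {a n : ℕ} (ha : 2 ≤ a) (hn : 0 < n) (j : ℕ) :
    nuMult a (n * a ^ j) = nuMult a n + j := by
  have ha0 : 0 < a := by omega
  have hpos : 0 < n * a ^ j := Nat.mul_pos hn (pow_pos ha0 j)
  have hν := (nuMult_eq_iff ha hn (j := nuMult a n)).mp rfl
  rw [nuMult_eq_iff ha hpos]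
  constructor
  · rw [pow_add]
    exact mul_dvd_mul hν.1 dvd_rfl
  · intro hd
    apply hν.2
    have : a ^ (nuMult a n + 1) * a ^ j ∣ n * a ^ j := by
      rw [← pow_add]
      convert hd using 2
      ring
    exact (mul_dvd_mul_iff_right (pow_ne_zero j (by omega))).mp this

lemma card_dvd_Icc (N d : ℕ) :
    ((Finset.Icc 1 N).filter (fun n => d ∣ n)).card = N / d := by
  rw [show Finset.Icc 1 N = Finset.Ioc 0 N from rfl]
  exact Nat.Ioc_filter_dvd_card_eq_div N d

lemma card_nu_eq {a : ℕ} (ha : 2 ≤ a) (N j : ℕ) :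
    ((Finset.Icc 1 N).filter (fun n => nuMult a n = j)).card = N / a ^ j - N / a ^ (j + 1) := by
  have h1 : ((Finset.Icc 1 N).filter (fun n => nuMult a n = j)) =
      ((Finset.Icc 1 N).filter (fun n => a ^ j ∣ n)).filter (fun n => ¬ a ^ (j + 1) ∣ n) := by
    rw [Finset.filter_filter]
    apply Finset.filter_congr
    intro n hn
    simp only [Finset.mem_Icc] at hn
    exact nuMult_eq_iff ha (by omega)
  have h2 : (((Finset.Icc 1 N).filter (fun n => a ^ j ∣ n)).filter (fun n => a ^ (j + 1) ∣ n)) =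
      ((Finset.Icc 1 N).filter (fun n => a ^ (j + 1) ∣ n)) := by
    rw [Finset.filter_filter]
    apply Finset.filter_congr
    intro n _
    constructor
    · exact fun h => h.2
    · exact fun h => ⟨(pow_dvd_pow a j.le_succ).trans h, h⟩
  have h3 := Finset.card_filter_add_card_filter_not
    (s := (Finset.Icc 1 N).filter (fun n => a ^ j ∣ n)) (p := fun n => a ^ (j + 1) ∣ n)
  rw [h1, ← card_dvd_Icc N (a ^ j), ← card_dvd_Icc N (a ^ (j+1)), ← h2]
  omega

lemma main_count {a k : ℕ} (ha : 2 ≤ a) (hk : 2 ≤ k) (N : ℕ) :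
    ((Finset.Icc 1 N).filter (fun n => nuMult a n % k = k - 1)).card =
      ∑ m ∈ Finset.range (Nat.log a N + 1),
        (N / a ^ (m * k + (k - 1)) - N / a ^ (m * k + (k - 1) + 1)) := by
  set M := Nat.log a N + 1 with hM
  set T := (Finset.range (k * M)).filter (fun j => j % k = k - 1) with hT
  have hmem : ∀ n ∈ (Finset.Icc 1 N).filter (fun n => nuMult a n % k = k - 1),
      nuMult a n ∈ T := by
    intro n hn
    simp only [Finset.mem_filter, Finset.mem_Icc] at hn
    obtain ⟨⟨h1, h2⟩, h3⟩ := hn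
    have hdvd : a ^ (nuMult a n) ∣ n := ((nuMult_eq_iff ha (by omega)).mp rfl).1
    have hle : a ^ (nuMult a n) ≤ N := le_trans (Nat.le_of_dvd (by omega) hdvd) h2
    have hlog : nuMult a n ≤ Nat.log a N := by
      rw [Nat.le_log_iff_pow_le (by omega) (by omega)]
      exact hle
    simp only [hT, Finset.mem_filter, Finset.mem_range]
    exact ⟨by nlinarith [Nat.le_mul_of_pos_left M (show 0 < k by omega)], h3⟩
  rw [Finset.card_eq_sum_card_fiberwise hmem]
  have hfib : ∀ j ∈ T, (((Finset.Icc 1 N).filter (fun n => nuMult a n % k = k - 1)).filter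
      (fun n => nuMult a n = j)).card = N / a ^ j - N / a ^ (j + 1) := by
    intro j hj
    simp only [hT, Finset.mem_filter, Finset.mem_range] at hj
    rw [Finset.filter_filter, ← card_nu_eq ha N j]
    congr 1
    apply Finset.filter_congr
    intro n _
    constructor
    · exact fun h => h.2
    · exact fun h => ⟨by rw [h, hj.2], h⟩
  rw [Finset.sum_congr rfl hfib]
  have hTim : T = (Finset.range M).image (fun m => m * k + (k - 1)) := by
    ext j
    simp only [hT, Finset.mem_filter, Finset.mem_range, Finset.mem_image]
    constructor
    · rintro ⟨h1, h2⟩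
      refine ⟨j / k, ?_, ?_⟩
      · exact Nat.div_lt_of_lt_mul (by omega)
      · have h4 := Nat.div_add_mod j k
        have h5 : j / k * k = k * (j / k) := Nat.mul_comm _ _
        omega
    · rintro ⟨m, hm, rfl⟩
      constructor
      · have h1 : (m + 1) * k ≤ M * k := Nat.mul_le_mul_right k hm
        have h2 : (m + 1) * k = m * k + k := by ring
        have h3 : k * M = M * k := Nat.mul_comm _ _
        omega
      · rw [Nat.add_comm, Nat.add_mul_mod_self_right]
        exact Nat.mod_eq_of_lt (by omega)
  rw [hTim, Finset.sum_image]
  intro x _ y _ h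
  have : x * k = y * k := by simp only at h; omega
  exact Nat.eq_of_mul_eq_mul_right (by omega) this

lemma div_real_lb (x d : ℕ) (hd : 0 < d) : (x : ℝ) / d - 1 < ((x / d : ℕ) : ℝ) := by
  have h1 : d * (x / d) + x % d = x := Nat.div_add_mod x d
  have h2 : x % d < d := Nat.mod_lt x hd
  have c1 : (d:ℝ) * ((x / d : ℕ):ℝ) + ((x % d : ℕ):ℝ) = (x:ℝ) := by exact_mod_cast h1
  have c2 : ((x % d : ℕ):ℝ) < (d:ℝ) := by exact_mod_cast h2
  have hd' : (0:ℝ) < (d:ℝ) := by exact_mod_cast hd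
  rw [sub_lt_iff_lt_add, div_lt_iff₀ hd']
  nlinarith [Nat.cast_nonneg (x % d) (α := ℝ)]

lemma div_real_ub (x d : ℕ) : ((x / d : ℕ) : ℝ) ≤ (x : ℝ) / d := Nat.cast_div_le

lemma sum_estimate {a k : ℕ} (ha : 2 ≤ a) (hk : 2 ≤ k) (N : ℕ) :
    |(((∑ m ∈ Finset.range (Nat.log a N + 1),
        (N / a ^ (m * k + (k - 1)) - N / a ^ (m * k + (k - 1) + 1)) : ℕ)) : ℝ)
      - (N : ℝ) * (((a:ℝ) - 1) / ((a:ℝ) ^ k - 1))| ≤ (Nat.log a N : ℝ) + 2 := by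
  set M := Nat.log a N + 1 with hM
  set A : ℝ := (a : ℝ) with hA
  have hA1 : (1:ℝ) < A := by rw [hA]; exact_mod_cast (by omega : 1 < a)
  have hA0 : (0:ℝ) < A := by linarith
  have hAk1 : (1:ℝ) < A ^ k := one_lt_pow₀ hA1 (by omega)
  have hAk0 : (0:ℝ) < A ^ k := by linarith
  set c : ℝ := (A - 1) / (A ^ k - 1) with hc
  set r : ℝ := (A ^ k)⁻¹ with hr
  have hr0 : 0 < r := inv_pos.mpr hAk0
  have hr1 : r < 1 := inv_lt_one_of_one_lt₀ hAk1
  set u : ℕ → ℝ := fun m => (N : ℝ) * (A - 1) / (A ^ k * (A ^ k) ^ m) with hu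
  have hpowpos : ∀ j : ℕ, 0 < a ^ j := fun j => pow_pos (by omega) j
  have hApow : ∀ j : ℕ, ((a ^ j : ℕ) : ℝ) = A ^ j := fun j => by push_cast [hA]; ring
  -- each nat term is within 1 of u m
  have hterm : ∀ m, |((N / a ^ (m * k + (k - 1)) - N / a ^ (m * k + (k - 1) + 1) : ℕ) : ℝ) - u m| ≤ 1 := by
    intro m
    set j := m * k + (k - 1) with hj
    have hle : N / a ^ (j + 1) ≤ N / a ^ j :=
      Nat.div_le_div_left (Nat.pow_le_pow_right (by omega) (Nat.le_succ j)) (hpowpos j)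
    have hcast : ((N / a ^ j - N / a ^ (j + 1) : ℕ) : ℝ)
        = ((N / a ^ j : ℕ) : ℝ) - ((N / a ^ (j + 1) : ℕ) : ℝ) := Nat.cast_sub hle
    -- the exact real difference equals u m
    have hexact : (N : ℝ) / (A ^ j) - (N : ℝ) / (A ^ (j + 1)) = u m := by
      have e1 : A ^ (j + 1) = A ^ k * (A ^ k) ^ m := by
        rw [← pow_mul, ← pow_add]
        congr 1
        have hcomm : m * k = k * m := Nat.mul_comm m k
        omega
      have e2 : A ^ j * A = A ^ (j + 1) := by rw [pow_succ]
      have h1 : A ^ j ≠ 0 := by positivity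
      have h2 : A ^ (j+1) ≠ 0 := by positivity
      have key : (N : ℝ) / (A ^ j) - (N : ℝ) / (A ^ j * A) = (N : ℝ) * (A - 1) / (A ^ j * A) := by
        field_simp
      rw [hu]
      simp only
      rw [← e1, ← e2, key]
    have lb1 := div_real_lb N (a ^ j) (hpowpos j)
    have ub1 := div_real_ub N (a ^ j)
    have lb2 := div_real_lb N (a ^ (j + 1)) (hpowpos (j + 1))
    have ub2 := div_real_ub N (a ^ (j + 1))
    rw [hApow] at lb1 ub1 lb2 ub2
    rw [hcast, abs_le]
    constructor <;> nlinarith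
  -- sum of u equals N * c * (1 - r ^ M)
  have h1r : (1 : ℝ) - r ≠ 0 := by linarith
  have hsum_u : ∑ m ∈ Finset.range M, u m = (N : ℝ) * c * (1 - r ^ M) := by
    have hform : ∀ m, u m = (N : ℝ) * ((A - 1) / A ^ k) * r ^ m := by
      intro m
      rw [hu]
      simp only
      rw [hr, inv_pow]
      field_simp
    have hgeom : (∑ m ∈ Finset.range M, r ^ m) = (1 - r ^ M) / (1 - r) := by
      have h := geom_sum_mul r M
      rw [eq_div_iff h1r]
      linear_combination -h
    have hcr : (A - 1) / A ^ k = c * (1 - r) := by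
      rw [hc, hr]
      have h1 : A ^ k - 1 ≠ 0 := by linarith
      have h2 : (A ^ k : ℝ) ≠ 0 := by linarith
      field_simp
    rw [Finset.sum_congr rfl fun m _ => hform m, ← Finset.mul_sum, hgeom, hcr]
    field_simp
  -- assemble
  have hsum : |(((∑ m ∈ Finset.range M,
      (N / a ^ (m * k + (k - 1)) - N / a ^ (m * k + (k - 1) + 1)) : ℕ)) : ℝ)
      - ∑ m ∈ Finset.range M, u m| ≤ M := by
    rw [Nat.cast_sum]
    rw [← Finset.sum_sub_distrib]
    calc |∑ m ∈ Finset.range M, (((N / a ^ (m * k + (k - 1)) - N / a ^ (m * k + (k - 1) + 1) : ℕ) : ℝ) - u m)|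
        ≤ ∑ m ∈ Finset.range M, |(((N / a ^ (m * k + (k - 1)) - N / a ^ (m * k + (k - 1) + 1) : ℕ) : ℝ) - u m)| :=
          Finset.abs_sum_le_sum_abs _ _
      _ ≤ ∑ m ∈ Finset.range M, 1 := Finset.sum_le_sum fun m _ => hterm m
      _ = M := by simp
  -- N * c * r ^ M ≤ 1
  have hNr : (N : ℝ) * r ^ M ≤ 1 := by
    have h1 : N < a ^ M := Nat.lt_pow_succ_log_self (by omega) N
    have h2 : (N : ℝ) < A ^ M := by rw [← hApow]; exact_mod_cast h1
    have h3 : A ^ M ≤ (A ^ k) ^ M := pow_le_pow_left₀ (le_of_lt hA0) (le_self_pow₀ (by linarith) (by omega)) M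
    rw [hr, inv_pow]
    rw [mul_inv_le_iff₀ (by positivity)]
    calc (N:ℝ) ≤ A ^ M := le_of_lt h2
      _ ≤ (A^k)^M := h3
      _ = 1 * (A^k)^M := by ring
  have hc0 : 0 ≤ c := by
    rw [hc]
    apply div_nonneg <;> linarith
  have hc1 : c ≤ 1 := by
    rw [hc, div_le_one (by linarith)]
    have : A ≤ A ^ k := le_self_pow₀ (by linarith) (by omega)
    linarith
  have hrM : 0 ≤ r ^ M := by positivity
  have hrM1 : r ^ M ≤ 1 := pow_le_one₀ (le_of_lt hr0) (le_of_lt hr1)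
  -- final
  have key : |(N : ℝ) * c * (1 - r ^ M) - (N : ℝ) * c| ≤ 1 := by
    rw [abs_le]
    constructor <;> nlinarith
  have htri := abs_sub_le
    ((((∑ m ∈ Finset.range M, (N / a ^ (m * k + (k - 1)) - N / a ^ (m * k + (k - 1) + 1)) : ℕ)) : ℝ))
    ((N : ℝ) * c * (1 - r ^ M)) ((N : ℝ) * c)
  rw [hsum_u] at hsum
  have hMcast : ((M : ℕ) : ℝ) = (Nat.log a N : ℝ) + 1 := by rw [hM]; push_cast; ring
  linarith [htri, hsum, key, hMcast.le, hMcast.ge]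

lemma log_div_tendsto (a : ℕ) :
    Filter.Tendsto (fun N : ℕ => ((Nat.log a N : ℝ) + 2) / N) Filter.atTop (nhds 0) := by
  have hlogx : Filter.Tendsto (fun x : ℝ => Real.log x / x) Filter.atTop (nhds 0) := by
    simpa using Real.tendsto_pow_log_div_mul_add_atTop 1 0 1 one_ne_zero
  have hlogN : Filter.Tendsto (fun N : ℕ => Real.log N / N) Filter.atTop (nhds 0) :=
    hlogx.comp tendsto_natCast_atTop_atTop
  have hg : Filter.Tendsto (fun N : ℕ => (Real.log N / N) / Real.log a + 2 / N)
      Filter.atTop (nhds 0) := by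
    have h1 := hlogN.div_const (Real.log a)
    have h2 := tendsto_const_div_atTop_nhds_zero_nat (2:ℝ)
    simpa using h1.add h2
  apply squeeze_zero' (g := fun N : ℕ => (Real.log N / N) / Real.log a + 2 / N)
  · filter_upwards with N
    positivity
  · filter_upwards [Filter.eventually_ge_atTop 1] with N hN
    have hN0 : (0:ℝ) < N := by exact_mod_cast hN
    have hb : (Nat.log a N : ℝ) ≤ Real.logb a N := Real.natLog_le_logb N a
    have hsplit : ((Nat.log a N : ℝ) + 2) / N = (Nat.log a N : ℝ) / N + 2 / N := by ring
    rw [hsplit]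
    have h2 : (Nat.log a N : ℝ) / N ≤ (Real.log N / N) / Real.log a := by
      rw [Real.logb] at hb
      calc (Nat.log a N : ℝ) / N ≤ (Real.log N / Real.log a) / N := by gcongr
        _ = (Real.log N / N) / Real.log a := by ring
    linarith
  · exact hg

end Auxiliary

/-- For `a, k ≥ 2` and `F = {1, a, …, a^{k-1}}`, the set `S(a,k)` is
multiplicatively `F`-syndetic, and its natural density is `(a-1)/(a^k-1)`. -/
theorem Sak_syndetic_and_density (a k : ℕ) (ha : 2 ≤ a) (hk : 2 ≤ k) :
    MultSyndeticWith ((Finset.range k).image (fun j => a ^ j)) (Sak a k) ∧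
    Filter.Tendsto (fun N : ℕ => ((Sak a k ∩ Set.Icc 1 N).ncard : ℝ) / N)
      Filter.atTop (nhds (((a : ℝ) - 1) / ((a : ℝ) ^ k - 1))) := by
  constructor
  · -- syndetic
    intro n hn
    set v := nuMult a n with hv
    have hvk : v % k < k := Nat.mod_lt _ (by omega)
    refine ⟨a ^ (k - 1 - v % k),
      Finset.mem_image.2 ⟨k - 1 - v % k, Finset.mem_range.2 (by omega), rfl⟩, ?_⟩
    have hpos : 0 < n * a ^ (k - 1 - v % k) :=
      Nat.mul_pos hn (pow_pos (by omega) _)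
    refine ⟨hpos, ?_⟩
    rw [nuMult_mul_pow ha hn, ← hv]
    have hdm := Nat.div_add_mod v k
    have he : v + (k - 1 - v % k) = k * (v / k) + (k - 1) := by omega
    rw [he, Nat.mul_add_mod, Nat.mod_eq_of_lt (by omega)]
  · -- density
    have hset : ∀ N : ℕ, (Sak a k ∩ Set.Icc 1 N).ncard
        = ((Finset.Icc 1 N).filter (fun n => nuMult a n % k = k - 1)).card := by
      intro N
      have hEq : Sak a k ∩ Set.Icc 1 N
          = ↑((Finset.Icc 1 N).filter (fun n => nuMult a n % k = k - 1)) := by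
        ext n
        simp only [Set.mem_inter_iff, Sak, Set.mem_setOf_eq, Set.mem_Icc, Finset.coe_filter,
          Finset.mem_Icc]
        constructor
        · rintro ⟨⟨h0, hP⟩, h1, h2⟩; exact ⟨⟨h1, h2⟩, hP⟩
        · rintro ⟨⟨h1, h2⟩, hP⟩; exact ⟨⟨by omega, hP⟩, h1, h2⟩
      rw [hEq, Set.ncard_coe_finset]
    set c : ℝ := ((a:ℝ) - 1) / ((a:ℝ) ^ k - 1) with hc
    apply tendsto_of_tendsto_of_tendsto_of_le_of_le'
      (g := fun N : ℕ => c - ((Nat.log a N : ℝ) + 2) / N)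
      (h := fun N : ℕ => c + ((Nat.log a N : ℝ) + 2) / N)
    · simpa using tendsto_const_nhds.sub (log_div_tendsto a)
    · simpa using tendsto_const_nhds.add (log_div_tendsto a)
    · filter_upwards [Filter.eventually_ge_atTop 1] with N hN
      have hN0 : (0:ℝ) < N := by exact_mod_cast hN
      have habs := sum_estimate ha hk N
      rw [hset, main_count ha hk]
      obtain ⟨hl, hr⟩ := abs_le.mp habs
      have e1 : (N:ℝ) * (((a:ℝ) - 1) / ((a:ℝ) ^ k - 1)) = c * N := by rw [hc]; ring
      have e2 : ((Nat.log a N : ℝ) + 2) / N * N = (Nat.log a N : ℝ) + 2 :=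
        div_mul_cancel₀ _ hN0.ne'
      rw [sub_le_iff_le_add, ← add_div, le_div_iff₀ hN0]
      linarith
    · filter_upwards [Filter.eventually_ge_atTop 1] with N hN
      have hN0 : (0:ℝ) < N := by exact_mod_cast hN
      have habs := sum_estimate ha hk N
      rw [hset, main_count ha hk]
      obtain ⟨hl, hr⟩ := abs_le.mp habs
      have e1 : (N:ℝ) * (((a:ℝ) - 1) / ((a:ℝ) ^ k - 1)) = c * N := by rw [hc]; ring
      have e2 : ((Nat.log a N : ℝ) + 2) / N * N = (Nat.log a N : ℝ) + 2 :=
        div_mul_cancel₀ _ hN0.ne'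
      rw [div_le_iff₀ hN0, add_mul, e2]
      linarith
end

section
/- Let a, k ∈ ℕ with a ≥ 2 and k ≥ 2, let F = {1, a, a², …, a^{k−1}}, and let S(a,k) := {n ∈ ℕ : ν_a(n) ≡ k−1 (mod k)}, where ν_a(n) := max{j ∈ ℕ ∪ {0} : a^j ∣ n}. Then for every N ∈ ℕ and every multiplicatively F-syndetic set X ⊆ ℕ, one has |X ∩ {1,…,N}| ≥ |S(a,k) ∩ {1,…,N}|. -/
lemma nuMult_dvd (a n : ℕ) : a ^ nuMult a n ∣ n :=
  Nat.findGreatest_spec (P := fun j => a ^ j ∣ n) (Nat.zero_le n) (by simp)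

lemma nuMult_succ_not_dvd {a n : ℕ} (ha : 2 ≤ a) (hn : 0 < n) :
    ¬ a ^ (nuMult a n + 1) ∣ n := by
  intro h
  have hle : a ^ (nuMult a n + 1) ≤ n := Nat.le_of_dvd hn h
  have h2 : nuMult a n + 1 < a ^ (nuMult a n + 1) :=
    Nat.lt_pow_self (by omega : 1 < a)
  have hfg : Nat.findGreatest (fun j => a ^ j ∣ n) n = nuMult a n := rfl
  exact Nat.findGreatest_is_greatest (P := fun j => a ^ j ∣ n)
    (Nat.lt_succ_self _) (by omega) h

lemma nuMult_eq {a n v : ℕ} (ha : 2 ≤ a) (hn : 0 < n)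
    (h1 : a ^ v ∣ n) (h2 : ¬ a ^ (v + 1) ∣ n) : nuMult a n = v := by
  have hvn : a ^ v ≤ n := Nat.le_of_dvd hn h1
  have hv : v < a ^ v := Nat.lt_pow_self (by omega : 1 < a)
  refine le_antisymm ?_ (Nat.le_findGreatest (P := fun j => a ^ j ∣ n) (by omega) h1)
  by_contra hlt
  push_neg at hlt
  exact h2 (dvd_trans (pow_dvd_pow a hlt) (nuMult_dvd a n))

lemma nuMult_mul_pow_s10 {a m : ℕ} (e : ℕ) (ha : 2 ≤ a) (hm : 0 < m) (hma : ¬ a ∣ m) :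
    nuMult a (m * a ^ e) = e := by
  have hapos : 0 < a ^ e := Nat.pow_pos (by omega)
  refine nuMult_eq ha (Nat.mul_pos hm hapos) (dvd_mul_left _ _) ?_
  intro h
  apply hma
  have h' : a ^ e * a ∣ a ^ e * m := by
    rw [← pow_succ]; rwa [mul_comm m] at h
  exact (mul_dvd_mul_iff_left (show a ^ e ≠ 0 by positivity)).mp h'

lemma not_dvd_div_nuMult {a n : ℕ} (ha : 2 ≤ a) (hn : 0 < n) :
    ¬ a ∣ n / a ^ nuMult a n := by
  intro h
  apply nuMult_succ_not_dvd ha hn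
  obtain ⟨c, hc⟩ := h
  have hd := nuMult_dvd a n
  have hn' : n = a ^ nuMult a n * (a * c) := by
    rw [← hc, Nat.mul_div_cancel' hd]
  exact ⟨c, by calc n = a ^ nuMult a n * (a * c) := hn'
    _ = a ^ (nuMult a n + 1) * c := by rw [pow_succ]; ring⟩

/-- For `a, k ≥ 2` and `F = {1, a, …, a^{k-1}}`, the set `S(a,k)` has
minimal counting function among multiplicatively `F`-syndetic sets: for every `N` and
every multiplicatively `F`-syndetic `X`, `|X ∩ [N]| ≥ |S(a,k) ∩ [N]|`. -/
theorem Sak_minimal (a k : ℕ) (ha : 2 ≤ a) (hk : 2 ≤ k) (N : ℕ) (X : Set ℕ)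
    (hX : MultSyndeticWith ((Finset.range k).image (fun j => a ^ j)) X) :
    (Sak a k ∩ Set.Icc 1 N).ncard ≤ (X ∩ Set.Icc 1 N).ncard := by
  classical
  have apos : 0 < a := by omega
  have kpos : 0 < k := by omega
  -- choice of exponent witnesses
  have hchoice : ∀ n : ℕ, 0 < n → ∃ j : ℕ, j < k ∧ n * a ^ j ∈ X := by
    intro n hn
    obtain ⟨t, htF, htX⟩ := hX n hn
    simp only [Finset.mem_image, Finset.mem_range] at htF
    obtain ⟨j, hj, rfl⟩ := htF
    exact ⟨j, hj, htX⟩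
  let jfun : ℕ → ℕ := fun n => if h : 0 < n then (hchoice n h).choose else 0
  have hjlt : ∀ n, 0 < n → jfun n < k := by
    intro n hn; simp only [jfun, dif_pos hn]; exact (hchoice n hn).choose_spec.1
  have hjX : ∀ n, 0 < n → n * a ^ jfun n ∈ X := by
    intro n hn; simp only [jfun, dif_pos hn]; exact (hchoice n hn).choose_spec.2
  -- the map
  let f : ℕ → ℕ := fun s => (s / a ^ (k - 1)) * a ^ (jfun (s / a ^ (k - 1)))
  -- decomposition facts for s ∈ Sak ∩ Icc
  have key : ∀ s ∈ Sak a k ∩ Set.Icc 1 N,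
      ∃ m v j : ℕ, 0 < m ∧ ¬ a ∣ m ∧ j < k ∧ nuMult a s = v ∧ v % k = k - 1 ∧
        s = m * a ^ v ∧ f s = m * a ^ (v - (k - 1) + j) ∧ f s ∈ X := by
    rintro s ⟨⟨hs, hv⟩, hs1, hsN⟩
    obtain ⟨v, hveq⟩ : ∃ v, nuMult a s = v := ⟨_, rfl⟩
    rw [hveq] at hv
    have hdvd : a ^ v ∣ s := hveq ▸ nuMult_dvd a s
    obtain ⟨m, hmeq⟩ : ∃ m, s / a ^ v = m := ⟨_, rfl⟩
    have hsm : s = m * a ^ v := by rw [← hmeq, Nat.div_mul_cancel hdvd]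
    have hm : 0 < m := by
      rcases Nat.eq_zero_or_pos m with h | h
      · rw [h, zero_mul] at hsm; omega
      · exact h
    have hma : ¬ a ∣ m := by
      rw [← hmeq, ← hveq]; exact not_dvd_div_nuMult ha hs
    have hkv : k - 1 ≤ v := by
      have := Nat.mod_le v k; omega
    have hn : s / a ^ (k - 1) = m * a ^ (v - (k - 1)) := by
      have hexp : v - (k - 1) + (k - 1) = v := by omega
      have h' : s = (m * a ^ (v - (k - 1))) * a ^ (k - 1) := by
        rw [mul_assoc, ← pow_add, hexp]; exact hsm
      rw [h', Nat.mul_div_cancel _ (Nat.pow_pos apos)]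
    have hnpos : 0 < s / a ^ (k - 1) := by
      rw [hn]; exact Nat.mul_pos hm (Nat.pow_pos apos)
    refine ⟨m, v, jfun (s / a ^ (k - 1)), hm, hma, hjlt _ hnpos, hveq, hv, hsm, ?_, ?_⟩
    · show (s / a ^ (k - 1)) * a ^ _ = _
      rw [hn, mul_assoc, ← pow_add]
    · exact hjX _ hnpos
  -- maps into X ∩ Icc 1 N
  have hmaps : ∀ s ∈ Sak a k ∩ Set.Icc 1 N, f s ∈ X ∩ Set.Icc 1 N := by
    intro s hsmem
    obtain ⟨m, v, j, hm, hma, hj, hveq, hvmod, hsm, hfs, hfX⟩ := key s hsmem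
    obtain ⟨⟨hs, _⟩, _, hsN⟩ := hsmem
    have hkv : k - 1 ≤ v := by have := Nat.mod_le v k; omega
    refine ⟨hfX, ?_, ?_⟩
    · rw [hfs]
      exact Nat.one_le_iff_ne_zero.mpr (by positivity)
    · calc f s = m * a ^ (v - (k - 1) + j) := hfs
        _ ≤ m * a ^ v := by
            apply Nat.mul_le_mul_left
            apply Nat.pow_le_pow_right apos
            omega
        _ = s := hsm.symm
        _ ≤ N := hsN
  -- injectivity via explicit recovery
  have hinj : Set.InjOn f (Sak a k ∩ Set.Icc 1 N) := by
    have hrec : ∀ s ∈ Sak a k ∩ Set.Icc 1 N,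
        (f s / a ^ nuMult a (f s)) * a ^ ((nuMult a (f s) / k) * k + (k - 1)) = s := by
      intro s hsmem
      obtain ⟨m, v, j, hm, hma, hj, hveq, hvmod, hsm, hfs, hfX⟩ := key s hsmem
      have hkv : k - 1 ≤ v := by
        have := Nat.mod_le v k; omega
      obtain ⟨q, hqdef⟩ : ∃ q, v / k = q := ⟨_, rfl⟩
      have hdm := Nat.div_add_mod v k
      rw [hqdef, hvmod] at hdm
      -- hdm : k * q + (k - 1) = v
      have hqk : v - (k - 1) = k * q := by omega
      have hnu : nuMult a (f s) = k * q + j := by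
        rw [hfs, hqk]
        exact nuMult_mul_pow_s10 _ ha hm hma
      have hq : nuMult a (f s) / k = q := by
        rw [hnu, Nat.mul_add_div kpos, Nat.div_eq_of_lt hj, add_zero]
      have hdivm : f s / a ^ nuMult a (f s) = m := by
        rw [hnu, hfs, hqk, Nat.mul_div_cancel _ (Nat.pow_pos apos)]
      rw [hdivm, hq]
      have hvback : q * k + (k - 1) = v := by rw [mul_comm]; omega
      rw [hvback]; exact hsm.symm
    intro s₁ h₁ s₂ h₂ heq
    rw [← hrec s₁ h₁, ← hrec s₂ h₂, heq]
  -- conclude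
  have hXfin : (X ∩ Set.Icc 1 N).Finite :=
    Set.Finite.inter_of_right (Set.finite_Icc 1 N) X
  calc (Sak a k ∩ Set.Icc 1 N).ncard
      = (f '' (Sak a k ∩ Set.Icc 1 N)).ncard := (Set.ncard_image_of_injOn hinj).symm
    _ ≤ (X ∩ Set.Icc 1 N).ncard := by
        apply Set.ncard_le_ncard _ hXfin
        rintro x ⟨s, hs, rfl⟩
        exact hmaps s hs
end

section
/- Let N ∈ ℕ, let p be a prime with 3N < p < 6N, let S ⊆ {1,…,N} be nonempty (viewed in ℤ/pℤ), and let f₁, f₂, f₃ : ℤ/pℤ → ℂ be 1-bounded functions. Then |Λ_S(f₁,f₂,f₃)| ≤ (p/|S|)^{1/2} · min_{1 ≤ k ≤ 3} ‖f_k‖_{U³(ℤ/pℤ)}. -/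
/-- The counting functional
`Λ_S(f₁,f₂,f₃) = (1/p)(1/|S|) ∑_{x ∈ ℤ/pℤ} ∑_{d ∈ S} f₁(x) f₂(x+d) f₃(x+2d)`. -/
noncomputable def Lam (p : ℕ) [NeZero p] (S : Finset (ZMod p))
    (f₁ f₂ f₃ : ZMod p → ℂ) : ℂ :=
  (p : ℂ)⁻¹ * (S.card : ℂ)⁻¹ *
    ∑ x : ZMod p, ∑ d ∈ S, f₁ x * f₂ (x + d) * f₃ (x + 2 * d)

/-- The multiplicative difference operator `Δ_h f(x) = f(x) · conj(f(x+h))`. -/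
def diffOp {p : ℕ} (h : ZMod p) (f : ZMod p → ℂ) : ZMod p → ℂ :=
  fun x => f x * (starRingEnd ℂ) (f (x + h))

/-- The Gowers `U³` norm of `f : ℤ/pℤ → ℂ`:
`‖f‖_{U³} = (𝔼_{x,h₁,h₂,h₃} Δ_{h₁}Δ_{h₂}Δ_{h₃} f(x))^{1/8}`. -/
noncomputable def gowersU3 (p : ℕ) [NeZero p] (f : ZMod p → ℂ) : ℝ :=
  ((∑ x : ZMod p, ∑ h₁ : ZMod p, ∑ h₂ : ZMod p, ∑ h₃ : ZMod p,
      diffOp h₁ (diffOp h₂ (diffOp h₃ f)) x).re / (p : ℝ) ^ 4) ^ ((1 : ℝ) / 8)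

set_option maxHeartbeats 1000000

open Finset

local notation "conj'" => starRingEnd ℂ

variable {p : ℕ} [NeZero p]

noncomputable def Tsum (p : ℕ) [NeZero p] (g₁ g₂ g₃ : ZMod p → ℂ) : ℂ :=
  ∑ x : ZMod p, ∑ d : ZMod p, g₁ x * g₂ (x + d) * g₃ (x + 2 * d)

noncomputable def Acorr (p : ℕ) [NeZero p] (g : ZMod p → ℂ) (h : ZMod p) : ℂ :=
  ∑ x : ZMod p, g x * conj' (g (x + h))

noncomputable def Wc (p : ℕ) [NeZero p] (g : ZMod p → ℂ) : ℝ :=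
  ∑ h : ZMod p, ‖Acorr p g h‖ ^ 2

lemma cs_complex (u v : ZMod p → ℂ) :
    ‖∑ x : ZMod p, u x * v x‖ ^ 2 ≤ (∑ x : ZMod p, ‖u x‖ ^ 2) * ∑ x : ZMod p, ‖v x‖ ^ 2 := by
  calc ‖∑ x : ZMod p, u x * v x‖ ^ 2 ≤ (∑ x : ZMod p, ‖u x‖ * ‖v x‖) ^ 2 := by
        refine pow_le_pow_left₀ (norm_nonneg _) ?_ 2
        exact (norm_sum_le _ _).trans (le_of_eq (by simp [norm_mul]))
    _ ≤ _ := Finset.sum_mul_sq_le_sq_mul_sq _ _ _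

lemma sum_normSq_expand (F : ZMod p → ZMod p → ℂ) :
    ((∑ y : ZMod p, ‖∑ d : ZMod p, F y d‖ ^ 2 : ℝ) : ℂ)
      = ∑ h : ZMod p, ∑ y : ZMod p, ∑ d : ZMod p, F y d * conj' (F y (d + h)) := by
  have step : ∀ y : ZMod p, ((‖∑ d : ZMod p, F y d‖ ^ 2 : ℝ) : ℂ)
      = ∑ d : ZMod p, ∑ h : ZMod p, F y d * conj' (F y (d + h)) := by
    intro y
    have h1 : ((‖∑ d : ZMod p, F y d‖ ^ 2 : ℝ) : ℂ)
        = (∑ d : ZMod p, F y d) * conj' (∑ d : ZMod p, F y d) := by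
      rw [Complex.mul_conj, Complex.normSq_eq_norm_sq]
    rw [h1, map_sum, Finset.sum_mul_sum]
    refine Finset.sum_congr rfl fun d _ => ?_
    refine (Fintype.sum_equiv (Equiv.addLeft d)
      (fun h => F y d * conj' (F y (d + h))) (fun d' => F y d * conj' (F y d')) fun h => ?_).symm
    simp
  calc ((∑ y : ZMod p, ‖∑ d : ZMod p, F y d‖ ^ 2 : ℝ) : ℂ)
      = ∑ y : ZMod p, ((‖∑ d : ZMod p, F y d‖ ^ 2 : ℝ) : ℂ) := by push_cast; rfl
    _ = ∑ y : ZMod p, ∑ d : ZMod p, ∑ h : ZMod p, F y d * conj' (F y (d + h)) :=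
        Finset.sum_congr rfl fun y _ => step y
    _ = ∑ y : ZMod p, ∑ h : ZMod p, ∑ d : ZMod p, F y d * conj' (F y (d + h)) :=
        Finset.sum_congr rfl fun y _ => Finset.sum_comm
    _ = _ := Finset.sum_comm

lemma sum_factor (φ ψ : ZMod p → ℂ) (a b : ZMod p) (hab : IsUnit (b - a)) :
    ∑ y : ZMod p, ∑ d : ZMod p, φ (y + a * d) * ψ (y + b * d)
      = (∑ u : ZMod p, φ u) * ∑ v : ZMod p, ψ v := by
  rw [Finset.sum_comm]
  have h1 : ∀ d : ZMod p, ∑ y : ZMod p, φ (y + a * d) * ψ (y + b * d)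
      = ∑ u : ZMod p, φ u * ψ (u + (b - a) * d) := by
    intro d
    refine Fintype.sum_equiv (Equiv.addRight (a * d)) _ _ fun y => ?_
    simp only [Equiv.coe_addRight]
    congr 2
    ring
  calc ∑ d : ZMod p, ∑ y : ZMod p, φ (y + a * d) * ψ (y + b * d)
      = ∑ d : ZMod p, ∑ u : ZMod p, φ u * ψ (u + (b - a) * d) :=
        Finset.sum_congr rfl fun d _ => h1 d
    _ = ∑ u : ZMod p, ∑ d : ZMod p, φ u * ψ (u + (b - a) * d) := Finset.sum_comm
    _ = ∑ u : ZMod p, φ u * ∑ d : ZMod p, ψ (u + (b - a) * d) :=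
        Finset.sum_congr rfl fun u _ => (Finset.mul_sum _ _ _).symm
    _ = ∑ u : ZMod p, φ u * ∑ v : ZMod p, ψ v := by
        refine Finset.sum_congr rfl fun u _ => ?_
        congr 1
        have hbij : Function.Bijective (fun d : ZMod p => u + (b - a) * d) := by
          refine Finite.injective_iff_bijective.mp fun x y hxy => ?_
          exact hab.mul_left_cancel (by simpa using hxy)
        exact Fintype.sum_bijective _ hbij (fun d => ψ (u + (b - a) * d)) ψ fun d => rfl
    _ = _ := by rw [← Finset.sum_mul]

lemma Acorr_norm_le (g : ZMod p → ℂ) (hb : ∀ x, ‖g x‖ ≤ 1) (h : ZMod p) :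
    ‖Acorr p g h‖ ≤ (p : ℝ) := by
  calc ‖Acorr p g h‖ ≤ ∑ x : ZMod p, ‖g x * conj' (g (x + h))‖ := norm_sum_le _ _
    _ ≤ ∑ _x : ZMod p, (1 : ℝ) := by
        refine Finset.sum_le_sum fun x _ => ?_
        rw [norm_mul, RCLike.norm_conj]
        exact mul_le_one₀ (hb x) (norm_nonneg _) (hb _)
    _ = (p : ℝ) := by simp [ZMod.card]

lemma Wc_nonneg (g : ZMod p → ℂ) : 0 ≤ Wc p g :=
  Finset.sum_nonneg fun _ _ => by positivity

lemma Wc_le (g : ZMod p → ℂ) (hb : ∀ x, ‖g x‖ ≤ 1) : Wc p g ≤ (p : ℝ) ^ 3 := by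
  calc Wc p g ≤ ∑ _h : ZMod p, (p : ℝ) ^ 2 := by
        refine Finset.sum_le_sum fun h _ => ?_
        exact pow_le_pow_left₀ (norm_nonneg _) (Acorr_norm_le g hb h) 2
    _ = (p : ℝ) ^ 3 := by simp [ZMod.card]; ring

lemma Q_eq (g₂ g₃ : ZMod p → ℂ) (h : ZMod p) :
    ∑ x : ZMod p, ∑ d : ZMod p,
        g₂ (x + d) * g₃ (x + 2 * d) * conj' (g₂ (x + (d + h)) * g₃ (x + 2 * (d + h)))
      = Acorr p g₂ h * Acorr p g₃ (2 * h) := by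
  have hpt : ∀ x d : ZMod p,
      g₂ (x + d) * g₃ (x + 2 * d) * conj' (g₂ (x + (d + h)) * g₃ (x + 2 * (d + h)))
        = (g₂ (x + 1 * d) * conj' (g₂ (x + 1 * d + h))) *
            (g₃ (x + 2 * d) * conj' (g₃ (x + 2 * d + 2 * h))) := by
    intro x d
    have e1 : x + (d + h) = x + 1 * d + h := by ring
    have e2 : x + 2 * (d + h) = x + 2 * d + 2 * h := by ring
    have e3 : x + d = x + 1 * d := by ring
    rw [map_mul, e1, e2, e3]
    ring
  simp only [hpt]
  exact sum_factor (fun u => g₂ u * conj' (g₂ (u + h))) (fun v => g₃ v * conj' (g₃ (v + 2 * h)))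
    1 2 (show IsUnit (2 - 1 : ZMod p) by norm_num)

lemma Tsq_le (g₁ g₂ g₃ : ZMod p → ℂ) (hb₁ : ∀ x, ‖g₁ x‖ ≤ 1) :
    ‖Tsum p g₁ g₂ g₃‖ ^ 2
      ≤ (p : ℝ) * ∑ x : ZMod p, ‖∑ d : ZMod p, g₂ (x + d) * g₃ (x + 2 * d)‖ ^ 2 := by
  have h0 : Tsum p g₁ g₂ g₃
      = ∑ x : ZMod p, g₁ x * ∑ d : ZMod p, g₂ (x + d) * g₃ (x + 2 * d) := by
    refine Finset.sum_congr rfl fun x _ => ?_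
    rw [Finset.mul_sum]
    exact Finset.sum_congr rfl fun d _ => (mul_assoc _ _ _)
  rw [h0]
  calc ‖∑ x : ZMod p, g₁ x * ∑ d : ZMod p, g₂ (x + d) * g₃ (x + 2 * d)‖ ^ 2
      ≤ (∑ x : ZMod p, ‖g₁ x‖ ^ 2) *
          ∑ x : ZMod p, ‖∑ d : ZMod p, g₂ (x + d) * g₃ (x + 2 * d)‖ ^ 2 := cs_complex _ _
    _ ≤ (p : ℝ) * ∑ x : ZMod p, ‖∑ d : ZMod p, g₂ (x + d) * g₃ (x + 2 * d)‖ ^ 2 := by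
        refine mul_le_mul_of_nonneg_right ?_ (Finset.sum_nonneg fun _ _ => by positivity)
        calc ∑ x : ZMod p, ‖g₁ x‖ ^ 2 ≤ ∑ _x : ZMod p, (1 : ℝ) :=
              Finset.sum_le_sum fun x _ => by
                have := hb₁ x; nlinarith [norm_nonneg (g₁ x)]
          _ = (p : ℝ) := by simp [ZMod.card]

lemma key23 (g₁ g₂ g₃ : ZMod p → ℂ) (hb₁ : ∀ x, ‖g₁ x‖ ≤ 1) (hb₂ : ∀ x, ‖g₂ x‖ ≤ 1)
    (hb₃ : ∀ x, ‖g₃ x‖ ≤ 1) (h2 : IsUnit (2 : ZMod p)) :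
    ‖Tsum p g₁ g₂ g₃‖ ^ 4 ≤ (p : ℝ) ^ 5 * Wc p g₂ ∧
      ‖Tsum p g₁ g₂ g₃‖ ^ 4 ≤ (p : ℝ) ^ 5 * Wc p g₃ := by
  set Q : ℝ := ∑ x : ZMod p, ‖∑ d : ZMod p, g₂ (x + d) * g₃ (x + 2 * d)‖ ^ 2 with hQdef
  have hQ0 : 0 ≤ Q := Finset.sum_nonneg fun _ _ => by positivity
  have hT : ‖Tsum p g₁ g₂ g₃‖ ^ 2 ≤ (p : ℝ) * Q := Tsq_le g₁ g₂ g₃ hb₁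
  have hQC : ((Q : ℝ) : ℂ) = ∑ h : ZMod p, Acorr p g₂ h * Acorr p g₃ (2 * h) := by
    calc ((Q : ℝ) : ℂ)
        = ∑ h : ZMod p, ∑ x : ZMod p, ∑ d : ZMod p,
            g₂ (x + d) * g₃ (x + 2 * d) *
              conj' (g₂ (x + (d + h)) * g₃ (x + 2 * (d + h))) :=
          sum_normSq_expand (fun x d => g₂ (x + d) * g₃ (x + 2 * d))
      _ = _ := Finset.sum_congr rfl fun h _ => Q_eq g₂ g₃ h
  have hQle : Q ≤ ∑ h : ZMod p, ‖Acorr p g₂ h‖ * ‖Acorr p g₃ (2 * h)‖ := by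
    calc Q = ‖((Q : ℝ) : ℂ)‖ := by rw [Complex.norm_real, Real.norm_eq_abs, abs_of_nonneg hQ0]
      _ = ‖∑ h : ZMod p, Acorr p g₂ h * Acorr p g₃ (2 * h)‖ := by rw [hQC]
      _ ≤ ∑ h : ZMod p, ‖Acorr p g₂ h * Acorr p g₃ (2 * h)‖ := norm_sum_le _ _
      _ = ∑ h : ZMod p, ‖Acorr p g₂ h‖ * ‖Acorr p g₃ (2 * h)‖ := by simp [norm_mul]
  have hQsq : Q ^ 2 ≤ (∑ h : ZMod p, ‖Acorr p g₂ h‖ ^ 2) *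
      ∑ h : ZMod p, ‖Acorr p g₃ (2 * h)‖ ^ 2 :=
    (pow_le_pow_left₀ hQ0 hQle 2).trans (Finset.sum_mul_sq_le_sq_mul_sq _ _ _)
  have hA2 : ∑ h : ZMod p, ‖Acorr p g₂ h‖ ^ 2 = Wc p g₂ := rfl
  have hA3 : ∑ h : ZMod p, ‖Acorr p g₃ (2 * h)‖ ^ 2 = Wc p g₃ := by
    have hbij : Function.Bijective (fun h : ZMod p => 2 * h) :=
      Finite.injective_iff_bijective.mp fun x y hxy => h2.mul_left_cancel hxy
    exact Fintype.sum_bijective _ hbij (fun h => ‖Acorr p g₃ (2 * h)‖ ^ 2)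
      (fun h => ‖Acorr p g₃ h‖ ^ 2) fun h => rfl
  have hT4 : ‖Tsum p g₁ g₂ g₃‖ ^ 4 ≤ (p : ℝ) ^ 2 * Q ^ 2 := by
    calc ‖Tsum p g₁ g₂ g₃‖ ^ 4 = (‖Tsum p g₁ g₂ g₃‖ ^ 2) ^ 2 := by ring
      _ ≤ ((p : ℝ) * Q) ^ 2 := pow_le_pow_left₀ (by positivity) hT 2
      _ = (p : ℝ) ^ 2 * Q ^ 2 := by ring
  have hW2 : Wc p g₂ ≤ (p : ℝ) ^ 3 := Wc_le g₂ hb₂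
  have hW3 : Wc p g₃ ≤ (p : ℝ) ^ 3 := Wc_le g₃ hb₃
  have hW2n : 0 ≤ Wc p g₂ := Wc_nonneg g₂
  have hW3n : 0 ≤ Wc p g₃ := Wc_nonneg g₃
  rw [hA2, hA3] at hQsq
  constructor
  · calc ‖Tsum p g₁ g₂ g₃‖ ^ 4 ≤ (p : ℝ) ^ 2 * Q ^ 2 := hT4
      _ ≤ (p : ℝ) ^ 2 * (Wc p g₂ * (p : ℝ) ^ 3) := by
          refine mul_le_mul_of_nonneg_left (hQsq.trans ?_) (by positivity)
          exact mul_le_mul_of_nonneg_left hW3 hW2n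
      _ = (p : ℝ) ^ 5 * Wc p g₂ := by ring
  · calc ‖Tsum p g₁ g₂ g₃‖ ^ 4 ≤ (p : ℝ) ^ 2 * Q ^ 2 := hT4
      _ ≤ (p : ℝ) ^ 2 * ((p : ℝ) ^ 3 * Wc p g₃) := by
          refine mul_le_mul_of_nonneg_left (hQsq.trans ?_) (by positivity)
          exact mul_le_mul_of_nonneg_right hW2 hW3n
      _ = (p : ℝ) ^ 5 * Wc p g₃ := by ring

lemma T_rev (g₁ g₂ g₃ : ZMod p → ℂ) : Tsum p g₁ g₂ g₃ = Tsum p g₃ g₂ g₁ := by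
  unfold Tsum
  calc ∑ x : ZMod p, ∑ d : ZMod p, g₁ x * g₂ (x + d) * g₃ (x + 2 * d)
      = ∑ d : ZMod p, ∑ x : ZMod p, g₁ x * g₂ (x + d) * g₃ (x + 2 * d) := Finset.sum_comm
    _ = ∑ d : ZMod p, ∑ x : ZMod p, g₃ x * g₂ (x + -d) * g₁ (x + 2 * -d) := by
        refine Finset.sum_congr rfl fun d _ => ?_
        refine Fintype.sum_equiv (Equiv.addRight (2 * d))
          (fun x => g₁ x * g₂ (x + d) * g₃ (x + 2 * d))
          (fun x => g₃ x * g₂ (x + -d) * g₁ (x + 2 * -d)) fun x => ?_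
        simp only [Equiv.coe_addRight]
        have e1 : x + 2 * d + -d = x + d := by ring
        have e2 : x + 2 * d + 2 * -d = x := by ring
        rw [e1, e2]; ring
    _ = ∑ d : ZMod p, ∑ x : ZMod p, g₃ x * g₂ (x + d) * g₁ (x + 2 * d) := by
        refine Fintype.sum_equiv (Equiv.neg (ZMod p))
          (fun d => ∑ x : ZMod p, g₃ x * g₂ (x + -d) * g₁ (x + 2 * -d))
          (fun d => ∑ x : ZMod p, g₃ x * g₂ (x + d) * g₁ (x + 2 * d)) fun d => ?_
        simp
    _ = _ := Finset.sum_comm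

lemma key1 (g₁ g₂ g₃ : ZMod p → ℂ) (hb₁ : ∀ x, ‖g₁ x‖ ≤ 1) (hb₂ : ∀ x, ‖g₂ x‖ ≤ 1)
    (hb₃ : ∀ x, ‖g₃ x‖ ≤ 1) (h2 : IsUnit (2 : ZMod p)) :
    ‖Tsum p g₁ g₂ g₃‖ ^ 4 ≤ (p : ℝ) ^ 5 * Wc p g₁ := by
  rw [T_rev]
  exact (key23 g₃ g₂ g₁ hb₃ hb₂ hb₁ h2).2

lemma sum_gd_sq (f₁ f₂ f₃ : ZMod p → ℂ) :
    ((∑ d : ZMod p, ‖∑ x : ZMod p, f₁ x * f₂ (x + d) * f₃ (x + 2 * d)‖ ^ 2 : ℝ) : ℂ)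
      = ∑ h : ZMod p, Tsum p (diffOp h f₁) (diffOp h f₂) (diffOp h f₃) := by
  calc ((∑ d : ZMod p, ‖∑ x : ZMod p, f₁ x * f₂ (x + d) * f₃ (x + 2 * d)‖ ^ 2 : ℝ) : ℂ)
      = ∑ h : ZMod p, ∑ d : ZMod p, ∑ x : ZMod p,
          f₁ x * f₂ (x + d) * f₃ (x + 2 * d) *
            conj' (f₁ (x + h) * f₂ (x + h + d) * f₃ (x + h + 2 * d)) :=
        sum_normSq_expand (fun d x => f₁ x * f₂ (x + d) * f₃ (x + 2 * d))
    _ = _ := by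
        refine Finset.sum_congr rfl fun h _ => ?_
        rw [Finset.sum_comm]
        unfold Tsum diffOp
        refine Finset.sum_congr rfl fun x _ => Finset.sum_congr rfl fun d _ => ?_
        have e1 : x + h + d = x + d + h := by ring
        have e2 : x + h + 2 * d = x + 2 * d + h := by ring
        rw [map_mul, map_mul, e1, e2]
        ring

lemma U3_inner (g : ZMod p → ℂ) :
    ∑ x : ZMod p, ∑ h₁ : ZMod p, ∑ h₂ : ZMod p, diffOp h₁ (diffOp h₂ g) x
      = ((Wc p g : ℝ) : ℂ) := by
  have key : ∀ h₂ : ZMod p, ∑ x : ZMod p, ∑ h₁ : ZMod p, diffOp h₁ (diffOp h₂ g) x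
      = ((‖Acorr p g h₂‖ ^ 2 : ℝ) : ℂ) := by
    intro h₂
    have hpt : ∀ x h₁ : ZMod p, diffOp h₁ (diffOp h₂ g) x
        = (g x * conj' (g (x + h₂))) * (conj' (g (x + h₁)) * g (x + h₁ + h₂)) := by
      intro x h₁
      simp only [diffOp, map_mul, Complex.conj_conj]
    calc ∑ x : ZMod p, ∑ h₁ : ZMod p, diffOp h₁ (diffOp h₂ g) x
        = ∑ x : ZMod p, (g x * conj' (g (x + h₂))) *
            ∑ h₁ : ZMod p, conj' (g (x + h₁)) * g (x + h₁ + h₂) := by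
          refine Finset.sum_congr rfl fun x _ => ?_
          rw [Finset.mul_sum]
          exact Finset.sum_congr rfl fun h₁ _ => hpt x h₁
      _ = ∑ x : ZMod p, (g x * conj' (g (x + h₂))) *
            ∑ y : ZMod p, conj' (g y) * g (y + h₂) := by
          refine Finset.sum_congr rfl fun x _ => ?_
          congr 1
          refine Fintype.sum_equiv (Equiv.addLeft x)
            (fun h₁ => conj' (g (x + h₁)) * g (x + h₁ + h₂))
            (fun y => conj' (g y) * g (y + h₂)) fun h₁ => ?_
          simp
      _ = Acorr p g h₂ * ∑ y : ZMod p, conj' (g y) * g (y + h₂) := by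
          rw [← Finset.sum_mul]; rfl
      _ = Acorr p g h₂ * conj' (Acorr p g h₂) := by
          congr 1
          rw [Acorr, map_sum]
          exact Finset.sum_congr rfl fun y _ => by rw [map_mul, Complex.conj_conj]
      _ = ((‖Acorr p g h₂‖ ^ 2 : ℝ) : ℂ) := by
          rw [Complex.mul_conj, Complex.normSq_eq_norm_sq]
  calc ∑ x : ZMod p, ∑ h₁ : ZMod p, ∑ h₂ : ZMod p, diffOp h₁ (diffOp h₂ g) x
      = ∑ x : ZMod p, ∑ h₂ : ZMod p, ∑ h₁ : ZMod p, diffOp h₁ (diffOp h₂ g) x :=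
        Finset.sum_congr rfl fun _ _ => Finset.sum_comm
    _ = ∑ h₂ : ZMod p, ∑ x : ZMod p, ∑ h₁ : ZMod p, diffOp h₁ (diffOp h₂ g) x :=
        Finset.sum_comm
    _ = ∑ h₂ : ZMod p, ((‖Acorr p g h₂‖ ^ 2 : ℝ) : ℂ) :=
        Finset.sum_congr rfl fun h₂ _ => key h₂
    _ = ((Wc p g : ℝ) : ℂ) := by rw [Wc]; push_cast; rfl

lemma U3_eq (f : ZMod p → ℂ) :
    (∑ x : ZMod p, ∑ h₁ : ZMod p, ∑ h₂ : ZMod p, ∑ h₃ : ZMod p,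
        diffOp h₁ (diffOp h₂ (diffOp h₃ f)) x).re
      = ∑ h₃ : ZMod p, Wc p (diffOp h₃ f) := by
  have hsw : ∑ x : ZMod p, ∑ h₁ : ZMod p, ∑ h₂ : ZMod p, ∑ h₃ : ZMod p,
        diffOp h₁ (diffOp h₂ (diffOp h₃ f)) x
      = ∑ h₃ : ZMod p, ∑ x : ZMod p, ∑ h₁ : ZMod p, ∑ h₂ : ZMod p,
        diffOp h₁ (diffOp h₂ (diffOp h₃ f)) x := by
    calc ∑ x : ZMod p, ∑ h₁ : ZMod p, ∑ h₂ : ZMod p, ∑ h₃ : ZMod p,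
          diffOp h₁ (diffOp h₂ (diffOp h₃ f)) x
        = ∑ x : ZMod p, ∑ h₁ : ZMod p, ∑ h₃ : ZMod p, ∑ h₂ : ZMod p,
          diffOp h₁ (diffOp h₂ (diffOp h₃ f)) x :=
          Finset.sum_congr rfl fun _ _ => Finset.sum_congr rfl fun _ _ => Finset.sum_comm
      _ = ∑ x : ZMod p, ∑ h₃ : ZMod p, ∑ h₁ : ZMod p, ∑ h₂ : ZMod p,
          diffOp h₁ (diffOp h₂ (diffOp h₃ f)) x :=
          Finset.sum_congr rfl fun _ _ => Finset.sum_comm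
      _ = _ := Finset.sum_comm
  rw [hsw]
  have : ∀ h₃ : ZMod p, ∑ x : ZMod p, ∑ h₁ : ZMod p, ∑ h₂ : ZMod p,
      diffOp h₁ (diffOp h₂ (diffOp h₃ f)) x = ((Wc p (diffOp h₃ f) : ℝ) : ℂ) :=
    fun h₃ => U3_inner (diffOp h₃ f)
  rw [Finset.sum_congr rfl fun h₃ _ => this h₃, ← Complex.ofReal_sum, Complex.ofReal_re]

lemma holder4 (a : ZMod p → ℝ) (ha : ∀ h, 0 ≤ a h) :
    (∑ h : ZMod p, a h) ^ 4 ≤ (p : ℝ) ^ 3 * ∑ h : ZMod p, a h ^ 4 := by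
  have c1 : (∑ h : ZMod p, a h) ^ 2 ≤ (p : ℝ) * ∑ h : ZMod p, a h ^ 2 := by
    simpa [ZMod.card] using sq_sum_le_card_mul_sum_sq (s := Finset.univ) (f := a)
  have c2 : (∑ h : ZMod p, a h ^ 2) ^ 2 ≤ (p : ℝ) * ∑ h : ZMod p, a h ^ 4 := by
    have := sq_sum_le_card_mul_sum_sq (s := (Finset.univ : Finset (ZMod p)))
      (f := fun h => a h ^ 2)
    simpa [ZMod.card, ← pow_mul] using this
  calc (∑ h : ZMod p, a h) ^ 4 = ((∑ h : ZMod p, a h) ^ 2) ^ 2 := by ring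
    _ ≤ ((p : ℝ) * ∑ h : ZMod p, a h ^ 2) ^ 2 := pow_le_pow_left₀ (sq_nonneg _) c1 2
    _ = (p : ℝ) ^ 2 * (∑ h : ZMod p, a h ^ 2) ^ 2 := by ring
    _ ≤ (p : ℝ) ^ 2 * ((p : ℝ) * ∑ h : ZMod p, a h ^ 4) :=
        mul_le_mul_of_nonneg_left c2 (by positivity)
    _ = (p : ℝ) ^ 3 * ∑ h : ZMod p, a h ^ 4 := by ring

lemma diffOp_bounded (f : ZMod p → ℂ) (hb : ∀ x, ‖f x‖ ≤ 1) (h : ZMod p) :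
    ∀ x, ‖diffOp h f x‖ ≤ 1 := by
  intro x
  rw [diffOp, norm_mul, RCLike.norm_conj]
  exact mul_le_one₀ (hb x) (norm_nonneg _) (hb _)

lemma lam_le (S : Finset (ZMod p)) (hSne : S.Nonempty) (f₁ f₂ f₃ φ : ZMod p → ℂ)
    (hkey : ∀ h : ZMod p,
      ‖Tsum p (diffOp h f₁) (diffOp h f₂) (diffOp h f₃)‖ ^ 4
        ≤ (p : ℝ) ^ 5 * Wc p (diffOp h φ)) :
    ‖Lam p S f₁ f₂ f₃‖ ≤
      Real.sqrt ((p : ℝ) / S.card) * gowersU3 p φ := by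
  have hp0 : 0 < (p : ℝ) := by exact_mod_cast NeZero.pos p
  have hc0 : 0 < (S.card : ℝ) := by exact_mod_cast hSne.card_pos
  obtain ⟨gd, hgd⟩ : ∃ gd : ZMod p → ℂ,
      gd = fun d => ∑ x : ZMod p, f₁ x * f₂ (x + d) * f₃ (x + 2 * d) := ⟨_, rfl⟩
  obtain ⟨TT, hTT⟩ : ∃ TT : ZMod p → ℝ,
      TT = fun h => ‖Tsum p (diffOp h f₁) (diffOp h f₂) (diffOp h f₃)‖ := ⟨_, rfl⟩
  obtain ⟨U, hU⟩ : ∃ U : ℝ, U = ∑ h₃ : ZMod p, Wc p (diffOp h₃ φ) := ⟨_, rfl⟩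
  obtain ⟨L, hL⟩ : ∃ L : ℝ, L = ‖∑ d ∈ S, gd d‖ := ⟨_, rfl⟩
  obtain ⟨G, hG'⟩ : ∃ G : ℝ, G = gowersU3 p φ := ⟨_, rfl⟩
  have hU0 : 0 ≤ U := by
    rw [hU]; exact Finset.sum_nonneg fun h _ => Wc_nonneg _
  have habs : ‖Lam p S f₁ f₂ f₃‖ = (p : ℝ)⁻¹ * (S.card : ℝ)⁻¹ * L := by
    have hLam : Lam p S f₁ f₂ f₃ = (p : ℂ)⁻¹ * (S.card : ℂ)⁻¹ * ∑ d ∈ S, gd d := by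
      rw [Lam, Finset.sum_comm, hgd]
    rw [hLam, norm_mul, norm_mul, norm_inv, norm_inv, Complex.norm_natCast,
      Complex.norm_natCast, ← hL]
  have hL0 : 0 ≤ L := by rw [hL]; exact norm_nonneg _
  have h1 : L ^ 2 ≤ (S.card : ℝ) * ∑ d : ZMod p, ‖gd d‖ ^ 2 := by
    rw [hL]
    calc ‖∑ d ∈ S, gd d‖ ^ 2 ≤ (∑ d ∈ S, ‖gd d‖) ^ 2 :=
          pow_le_pow_left₀ (norm_nonneg _) (norm_sum_le _ _) 2
      _ ≤ (S.card : ℝ) * ∑ d ∈ S, ‖gd d‖ ^ 2 := sq_sum_le_card_mul_sum_sq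
      _ ≤ (S.card : ℝ) * ∑ d : ZMod p, ‖gd d‖ ^ 2 := by
          refine mul_le_mul_of_nonneg_left ?_ hc0.le
          exact Finset.sum_le_sum_of_subset_of_nonneg (Finset.subset_univ S)
            fun d _ _ => by positivity
  have hgd0 : 0 ≤ ∑ d : ZMod p, ‖gd d‖ ^ 2 := Finset.sum_nonneg fun _ _ => by positivity
  have h2 : ∑ d : ZMod p, ‖gd d‖ ^ 2 ≤ ∑ h : ZMod p, TT h := by
    calc ∑ d : ZMod p, ‖gd d‖ ^ 2
        = ‖((∑ d : ZMod p, ‖gd d‖ ^ 2 : ℝ) : ℂ)‖ := by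
          rw [Complex.norm_real, Real.norm_eq_abs, abs_of_nonneg hgd0]
      _ = ‖∑ h : ZMod p, Tsum p (diffOp h f₁) (diffOp h f₂) (diffOp h f₃)‖ := by
          rw [hgd]
          rw [sum_gd_sq f₁ f₂ f₃]
      _ ≤ ∑ h : ZMod p, TT h := by
          rw [hTT]; exact norm_sum_le _ _
  have hTT0 : ∀ h, 0 ≤ TT h := by
    intro h; rw [hTT]; exact norm_nonneg _
  have h3 : (∑ h : ZMod p, TT h) ^ 4 ≤ (p : ℝ) ^ 8 * U := by
    calc (∑ h : ZMod p, TT h) ^ 4 ≤ (p : ℝ) ^ 3 * ∑ h : ZMod p, TT h ^ 4 :=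
          holder4 TT hTT0
      _ ≤ (p : ℝ) ^ 3 * ∑ h : ZMod p, (p : ℝ) ^ 5 * Wc p (diffOp h φ) := by
          refine mul_le_mul_of_nonneg_left
            (Finset.sum_le_sum fun h _ => ?_) (by positivity)
          rw [hTT]; exact hkey h
      _ = (p : ℝ) ^ 8 * U := by rw [hU, ← Finset.mul_sum]; ring
  have hG : G = (U / (p : ℝ) ^ 4) ^ ((1 : ℝ) / 8) := by
    rw [hG', gowersU3, U3_eq, hU]
  have hG0 : 0 ≤ G := by rw [hG]; positivity
  have hG8 : G ^ (8 : ℕ) = U / (p : ℝ) ^ 4 := by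
    rw [hG, ← Real.rpow_natCast ((U / (p : ℝ) ^ 4) ^ ((1 : ℝ) / 8)) 8,
      ← Real.rpow_mul (by positivity)]
    norm_num
  have hL8 : L ^ 8 ≤ (S.card : ℝ) ^ 4 * ((p : ℝ) ^ 8 * U) := by
    calc L ^ 8 = (L ^ 2) ^ 4 := by ring
      _ ≤ ((S.card : ℝ) * ∑ d : ZMod p, ‖gd d‖ ^ 2) ^ 4 :=
          pow_le_pow_left₀ (sq_nonneg _) h1 4
      _ = (S.card : ℝ) ^ 4 * (∑ d : ZMod p, ‖gd d‖ ^ 2) ^ 4 := by ring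
      _ ≤ (S.card : ℝ) ^ 4 * (∑ h : ZMod p, TT h) ^ 4 :=
          mul_le_mul_of_nonneg_left (pow_le_pow_left₀ hgd0 h2 4) (by positivity)
      _ ≤ (S.card : ℝ) ^ 4 * ((p : ℝ) ^ 8 * U) :=
          mul_le_mul_of_nonneg_left h3 (by positivity)
  have hR8 : ((p : ℝ) * (S.card : ℝ) * (Real.sqrt ((p : ℝ) / S.card) * G)) ^ 8
      = (S.card : ℝ) ^ 4 * ((p : ℝ) ^ 8 * U) := by
    have hs8 : Real.sqrt ((p : ℝ) / S.card) ^ 8 = ((p : ℝ) / S.card) ^ 4 := by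
      rw [show (8 : ℕ) = 2 * 4 from rfl, pow_mul, Real.sq_sqrt (by positivity)]
    calc ((p : ℝ) * (S.card : ℝ) * (Real.sqrt ((p : ℝ) / S.card) * G)) ^ 8
        = (p : ℝ) ^ 8 * (S.card : ℝ) ^ 8 * (Real.sqrt ((p : ℝ) / S.card) ^ 8 *
            G ^ (8 : ℕ)) := by ring
      _ = (p : ℝ) ^ 8 * (S.card : ℝ) ^ 8 * (((p : ℝ) / S.card) ^ 4 * (U / (p : ℝ) ^ 4)) := by
          rw [hs8, hG8]
      _ = (S.card : ℝ) ^ 4 * ((p : ℝ) ^ 8 * U) := by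
          field_simp
  have hLR : L ≤ (p : ℝ) * (S.card : ℝ) * (Real.sqrt ((p : ℝ) / S.card) * G) := by
    refine le_of_pow_le_pow_left₀ (n := 8) (by norm_num) (by positivity) ?_
    rw [hR8]; exact hL8
  rw [habs, ← hG']
  calc (p : ℝ)⁻¹ * (S.card : ℝ)⁻¹ * L
      ≤ (p : ℝ)⁻¹ * (S.card : ℝ)⁻¹ *
          ((p : ℝ) * (S.card : ℝ) * (Real.sqrt ((p : ℝ) / S.card) * G)) :=
        mul_le_mul_of_nonneg_left hLR (by positivity)
    _ = Real.sqrt ((p : ℝ) / S.card) * G := by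
        field_simp


/-- Generalised von Neumann theorem for `Λ_S`: for 1-bounded
`f₁, f₂, f₃ : ℤ/pℤ → ℂ`,
`|Λ_S(f₁,f₂,f₃)| ≤ (p/|S|)^{1/2} · min_k ‖f_k‖_{U³}`. -/
theorem lam_von_neumann (N p : ℕ) (hp : p.Prime) [NeZero p]
    (hp3 : 3 * N < p) (hp6 : p < 6 * N)
    (S : Finset (ZMod p)) (hSne : S.Nonempty)
    (hS : S ⊆ (Finset.Icc 1 N).image (Nat.cast : ℕ → ZMod p))
    (f₁ f₂ f₃ : ZMod p → ℂ)
    (hf₁ : ∀ x, ‖f₁ x‖ ≤ 1) (hf₂ : ∀ x, ‖f₂ x‖ ≤ 1)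
    (hf₃ : ∀ x, ‖f₃ x‖ ≤ 1) :
    ‖Lam p S f₁ f₂ f₃‖ ≤
      Real.sqrt ((p : ℝ) / S.card) *
        min (gowersU3 p f₁) (min (gowersU3 p f₂) (gowersU3 p f₃)) := by
  haveI := Fact.mk hp
  have hN1 : 1 ≤ N := by omega
  have hp4 : 4 ≤ p := by omega
  have h2 : IsUnit (2 : ZMod p) := by
    have h20 : (2 : ZMod p) ≠ 0 := by
      intro h
      have h2' : ((2 : ℕ) : ZMod p) = 0 := by exact_mod_cast h
      rw [ZMod.natCast_eq_zero_iff] at h2'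
      have := Nat.le_of_dvd (by norm_num) h2'
      omega
    exact isUnit_iff_ne_zero.mpr h20
  have hb₁ : ∀ x, ‖f₁ x‖ ≤ 1 := fun x => by exact hf₁ x
  have hb₂ : ∀ x, ‖f₂ x‖ ≤ 1 := fun x => by exact hf₂ x
  have hb₃ : ∀ x, ‖f₃ x‖ ≤ 1 := fun x => by exact hf₃ x
  have hd₁ : ∀ h, ∀ x, ‖diffOp h f₁ x‖ ≤ 1 := fun h => diffOp_bounded f₁ hb₁ h
  have hd₂ : ∀ h, ∀ x, ‖diffOp h f₂ x‖ ≤ 1 := fun h => diffOp_bounded f₂ hb₂ h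
  have hd₃ : ∀ h, ∀ x, ‖diffOp h f₃ x‖ ≤ 1 := fun h => diffOp_bounded f₃ hb₃ h
  have B₁ : ‖Lam p S f₁ f₂ f₃‖ ≤
      Real.sqrt ((p : ℝ) / S.card) * gowersU3 p f₁ :=
    lam_le S hSne f₁ f₂ f₃ f₁ fun h => key1 _ _ _ (hd₁ h) (hd₂ h) (hd₃ h) h2
  have B₂ : ‖Lam p S f₁ f₂ f₃‖ ≤
      Real.sqrt ((p : ℝ) / S.card) * gowersU3 p f₂ :=
    lam_le S hSne f₁ f₂ f₃ f₂ fun h =>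
      (key23 _ _ _ (hd₁ h) (hd₂ h) (hd₃ h) h2).1
  have B₃ : ‖Lam p S f₁ f₂ f₃‖ ≤
      Real.sqrt ((p : ℝ) / S.card) * gowersU3 p f₃ :=
    lam_le S hSne f₁ f₂ f₃ f₃ fun h =>
      (key23 _ _ _ (hd₁ h) (hd₂ h) (hd₃ h) h2).2
  rcases min_cases (gowersU3 p f₁) (min (gowersU3 p f₂) (gowersU3 p f₃)) with ⟨hm, _⟩ | ⟨hm, _⟩
  · rw [hm]; exact B₁
  · rw [hm]
    rcases min_cases (gowersU3 p f₂) (gowersU3 p f₃) with ⟨hm2, _⟩ | ⟨hm2, _⟩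
    · rw [hm2]; exact B₂
    · rw [hm2]; exact B₃
end
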